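/- arXiv:2205.14211 — 3 statements merged into one kernel-verified Lean document; each statement's English description precedes it below -/
import Mathlib

section
/- (Lemma 4.1, error propagation for the non-stationary policy) For every realization of the samples and every k ∈ {1,…,K}: 0 ≤ V* − V^{π'_k} ≤ Γ_k, where Γ_k := (1/A_∞)·Σ_{j=0}^{k−1} γ^j (π_k P_{k−j}^{k−1} − π_* P_*^j) E_{k−j} + 2H(α^k + A_{γ,k}/A_∞)·1. -/
open MeasureTheory ProbabilityTheory Finset Real

noncomputable section

/-- The transition kernel `P` applied to a state-value function:
`(Pv)(x,a) = Σ_z P(z|x,a) v(z)`. -/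
def mdpP {S A : Type} [Fintype S] (P : S → A → S → ℝ) (v : S → ℝ) : S → A → ℝ :=
  fun x a => ∑ z, P x a z * v z

/-- A policy applied to a Q-function: `(poq)(x) = Σ_a po(a|x) q(x,a)`. -/
def polAct {S A : Type} [Fintype A] (po : S → A → ℝ) (q : S → A → ℝ) : S → ℝ :=
  fun x => ∑ a, po x a * q x a

/-- `P` is a transition kernel. -/
def IsKernel {S A : Type} [Fintype S] (P : S → A → S → ℝ) : Prop :=
  (∀ x a z, 0 ≤ P x a z) ∧ ∀ x a, ∑ z, P x a z = 1

/-- `po` is a (Markov) policy. -/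
def IsPolicy {S A : Type} [Fintype A] (po : S → A → ℝ) : Prop :=
  (∀ x a, 0 ≤ po x a) ∧ ∀ x, ∑ a, po x a = 1

/-- The deterministic policy induced by `d : S → A`. -/
def detPol {S A : Type} [DecidableEq A] (d : S → A) : S → A → ℝ :=
  fun x a => if a = d x then 1 else 0

/-- The Bellman operator `T^po q = r + γ P (po q)`. -/
def bellmanOp {S A : Type} [Fintype S] [Fintype A] (P : S → A → S → ℝ) (r : S → A → ℝ)
    (γ : ℝ) (po : S → A → ℝ) (qf : S → A → ℝ) : S → A → ℝ :=
  fun x a => r x a + γ * mdpP P (polAct po qf) x a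

/-- `P^po = Ppo` acting on Q-functions. -/
def Ppi {S A : Type} [Fintype S] [Fintype A] (P : S → A → S → ℝ) (po : S → A → ℝ)
    (qf : S → A → ℝ) : S → A → ℝ :=
  mdpP P (polAct po qf)

/-- `PprodN P po j n` is `P^{po_{j+n-1}} ⋯ P^{po_j}` (`n` factors, identity for `n = 0`);
this is `P_j^i` of the paper with `n = i + 1 - j` factors. -/
def PprodN {S A : Type} [Fintype S] [Fintype A] (P : S → A → S → ℝ)
    (po : ℕ → S → A → ℝ) (j : ℕ) : ℕ → (S → A → ℝ) → S → A → ℝ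
  | 0, qf => qf
  | n + 1, qf => Ppi P (po (j + n)) (PprodN P po j n qf)

/-- The conditional standard deviation `σ(v)(x,a) = √(P(v²)(x,a) − (Pv)(x,a)²)`. -/
def sigmaP {S A : Type} [Fintype S] (P : S → A → S → ℝ) (v : S → ℝ) : S → A → ℝ :=
  fun x a => Real.sqrt (mdpP P (fun z => v z ^ 2) x a - (mdpP P v x a) ^ 2)

/-- `𝒩^po = Σ_{t=0}^∞ (γ po P)^t` acting on state-value functions. -/
def Npol {S A : Type} [Fintype S] [Fintype A] (P : S → A → S → ℝ) (γ : ℝ)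
    (po : S → A → ℝ) (vf : S → ℝ) : S → ℝ :=
  fun x => ∑' t : ℕ, ((fun uf : S → ℝ => fun z => γ * polAct po (mdpP P uf) z)^[t] vf) x

-- generic weighted sum lemmas
lemma wsum_mono {ι : Type} [Fintype ι] {w f g : ι → ℝ} (hw : ∀ i, 0 ≤ w i)
    (h : ∀ i, f i ≤ g i) : ∑ i, w i * f i ≤ ∑ i, w i * g i :=
  Finset.sum_le_sum fun i _ => mul_le_mul_of_nonneg_left (h i) (hw i)

lemma wsum_le_const {ι : Type} [Fintype ι] {w f : ι → ℝ} {c : ℝ} (hw : ∀ i, 0 ≤ w i)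
    (hw1 : ∑ i, w i = 1) (h : ∀ i, f i ≤ c) : ∑ i, w i * f i ≤ c := by
  calc ∑ i, w i * f i ≤ ∑ i, w i * c := wsum_mono hw h
    _ = c := by rw [← Finset.sum_mul, hw1, one_mul]

lemma const_le_wsum {ι : Type} [Fintype ι] {w f : ι → ℝ} {c : ℝ} (hw : ∀ i, 0 ≤ w i)
    (hw1 : ∑ i, w i = 1) (h : ∀ i, c ≤ f i) : c ≤ ∑ i, w i * f i := by
  calc c = ∑ i, w i * c := by rw [← Finset.sum_mul, hw1, one_mul]
    _ ≤ ∑ i, w i * f i := wsum_mono hw h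

lemma abs_wsum_le {ι : Type} [Fintype ι] {w f : ι → ℝ} {c : ℝ} (hw : ∀ i, 0 ≤ w i)
    (hw1 : ∑ i, w i = 1) (h : ∀ i, |f i| ≤ c) : |∑ i, w i * f i| ≤ c := by
  refine (Finset.abs_sum_le_sum_abs (fun i => w i * f i) Finset.univ).trans ?_
  calc ∑ i, |w i * f i| = ∑ i, w i * |f i| := by
        refine Finset.sum_congr rfl fun i _ => ?_
        rw [abs_mul, abs_of_nonneg (hw i)]
    _ ≤ c := wsum_le_const hw hw1 h

set_option linter.unusedSectionVars false
section mdp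
variable {S A : Type} [Fintype S] [Fintype A]

lemma detPol_policy [DecidableEq A] (d : S → A) : IsPolicy (detPol d) := by
  constructor
  · intro x a; unfold detPol; split <;> norm_num
  · intro x; simp [detPol]

lemma polAct_det [DecidableEq A] (d : S → A) (q : S → A → ℝ) (x : S) :
    polAct (detPol d) q x = q x (d x) := by
  simp [polAct, detPol, ite_mul]

lemma mdpP_lin3 (P : S → A → S → ℝ) (c1 c2 c3 : ℝ) (f g h : S → ℝ) (x : S) (a : A) :
    mdpP P (fun z => c1 * f z + c2 * g z + c3 * h z) x a
      = c1 * mdpP P f x a + c2 * mdpP P g x a + c3 * mdpP P h x a := by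
  unfold mdpP
  rw [Finset.mul_sum, Finset.mul_sum, Finset.mul_sum, ← Finset.sum_add_distrib,
    ← Finset.sum_add_distrib]
  exact Finset.sum_congr rfl fun z _ => by ring

lemma polAct_lin3 (po : S → A → ℝ) (c1 c2 c3 : ℝ) (f g h : S → A → ℝ) (x : S) :
    polAct po (fun x a => c1 * f x a + c2 * g x a + c3 * h x a) x
      = c1 * polAct po f x + c2 * polAct po g x + c3 * polAct po h x := by
  unfold polAct
  rw [Finset.mul_sum, Finset.mul_sum, Finset.mul_sum, ← Finset.sum_add_distrib,
    ← Finset.sum_add_distrib]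
  exact Finset.sum_congr rfl fun a _ => by ring

lemma polAct_sum (po : S → A → ℝ) (s : Finset ℕ) (c : ℕ → ℝ) (g : ℕ → S → A → ℝ) (x : S) :
    polAct po (fun x a => ∑ j ∈ s, c j * g j x a) x = ∑ j ∈ s, c j * polAct po (g j) x := by
  unfold polAct
  simp only [Finset.mul_sum]
  rw [Finset.sum_comm]
  exact Finset.sum_congr rfl fun j _ =>
    Finset.sum_congr rfl fun a _ => by ring

lemma mdpP_sum (P : S → A → S → ℝ) (s : Finset ℕ) (c : ℕ → ℝ) (g : ℕ → S → ℝ)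
    (x : S) (a : A) :
    mdpP P (fun z => ∑ j ∈ s, c j * g j z) x a = ∑ j ∈ s, c j * mdpP P (g j) x a := by
  unfold mdpP
  simp only [Finset.mul_sum]
  rw [Finset.sum_comm]
  exact Finset.sum_congr rfl fun j _ =>
    Finset.sum_congr rfl fun z _ => by ring

lemma Ppi_sum (P : S → A → S → ℝ) (po : S → A → ℝ) (s : Finset ℕ) (c : ℕ → ℝ)
    (g : ℕ → S → A → ℝ) (x : S) (a : A) :
    Ppi P po (fun x a => ∑ j ∈ s, c j * g j x a) x a = ∑ j ∈ s, c j * Ppi P po (g j) x a := by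
  unfold Ppi
  rw [show polAct po (fun x a => ∑ j ∈ s, c j * g j x a) = fun z => ∑ j ∈ s, c j * polAct po (g j) z
    from funext fun z => polAct_sum po s c g z]
  exact mdpP_sum P s c _ x a

end mdp

set_option linter.unusedSectionVars false
section mdp2
variable {S A : Type} [Fintype S] [Fintype A] [Nonempty S] [Nonempty A] [DecidableEq A]
  {P : S → A → S → ℝ} (hP : IsKernel P) {γ : ℝ} (hγ0 : 0 ≤ γ) (hγ1 : γ < 1)

include hP hγ0 hγ1 in
/-- positivity from one-step expansion -/
lemma pos_of_ge {po : S → A → ℝ} (hpo : IsPolicy po) (f : S → A → ℝ)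
    (h : ∀ x a, γ * Ppi P po f x a ≤ f x a) : ∀ x a, 0 ≤ f x a := by
  obtain ⟨⟨x0, a0⟩, hm⟩ := Finite.exists_min (fun p : S × A => f p.1 p.2)
  have hmin : ∀ x a, f x0 a0 ≤ f x a := fun x a => hm (x, a)
  have h1 : f x0 a0 ≤ Ppi P po f x0 a0 := by
    unfold Ppi mdpP
    refine const_le_wsum (fun z => hP.1 x0 a0 z) (hP.2 x0 a0) fun z => ?_
    refine const_le_wsum (fun b => hpo.1 z b) (hpo.2 z) fun b => hmin z b
  have h2 := h x0 a0
  have h3 : γ * f x0 a0 ≤ γ * Ppi P po f x0 a0 := mul_le_mul_of_nonneg_left h1 hγ0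
  have h4 : 0 ≤ f x0 a0 := by nlinarith
  intro x a; exact h4.trans (hmin x a)

include hP hγ0 hγ1 in
lemma qpol_bound {r : S → A → ℝ} (hr : ∀ x a, |r x a| ≤ 1) {H : ℝ} (hH : H = 1 / (1 - γ))
    {po : S → A → ℝ} (hpo : IsPolicy po) {q : S → A → ℝ}
    (hq : bellmanOp P r γ po q = q) : ∀ x a, |q x a| ≤ H := by
  obtain ⟨⟨x0, a0⟩, hm⟩ := Finite.exists_max (fun p : S × A => |q p.1 p.2|)
  have hmax : ∀ x a, |q x a| ≤ |q x0 a0| := fun x a => hm (x, a)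
  have hfix : q x0 a0 = r x0 a0 + γ * mdpP P (polAct po q) x0 a0 :=
    (congrFun (congrFun hq x0) a0).symm
  have h1 : |mdpP P (polAct po q) x0 a0| ≤ |q x0 a0| := by
    unfold mdpP
    refine abs_wsum_le (fun z => hP.1 x0 a0 z) (hP.2 x0 a0) fun z => ?_
    exact abs_wsum_le (fun b => hpo.1 z b) (hpo.2 z) fun b => hmax z b
  have h2 : |q x0 a0| ≤ 1 + γ * |q x0 a0| := by
    conv_lhs => rw [hfix]
    refine (abs_add_le _ _).trans ?_
    have := hr x0 a0
    have h3 : |γ * mdpP P (polAct po q) x0 a0| ≤ γ * |q x0 a0| := by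
      rw [abs_mul, abs_of_nonneg hγ0]
      exact mul_le_mul_of_nonneg_left h1 hγ0
    linarith
  have hγ : 0 < 1 - γ := by linarith
  have h4 : |q x0 a0| ≤ H := by
    rw [hH, le_div_iff₀ hγ]; nlinarith
  intro x a; exact (hmax x a).trans h4
end mdp2

set_option linter.unusedSectionVars false
set_option maxHeartbeats 1000000
section claims
variable {S A : Type} [Fintype S] [Fintype A] [Nonempty S] [Nonempty A] [DecidableEq A]
  {P : S → A → S → ℝ} (hP : IsKernel P) {γ α H : ℝ}
  (hγ0 : 0 ≤ γ) (hγ1 : γ < 1) (hα0 : 0 ≤ α) (hα1 : α < 1)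
  {r : S → A → ℝ}
  {sq : ℕ → S → A → ℝ} {w : ℕ → S → ℝ} {Ef : ℕ → S → A → ℝ} {pol : ℕ → S → A}

include hP hγ0 hα0 in
lemma claimU
    {pstar : S → A → ℝ} (hpstar : IsPolicy pstar) {Qs : S → A → ℝ}
    (hQfix : ∀ x a, Qs x a = r x a + γ * mdpP P (polAct pstar Qs) x a)
    (hQb : ∀ x a, |Qs x a| ≤ H)
    (hs0 : ∀ x a, sq 0 x a = 0)
    (hwp : ∀ k x, w k x = sq k x (pol k x))
    (hgr : ∀ k x a, sq k x a ≤ sq k x (pol k x))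
    (hclosed : ∀ k x a, sq (k + 1) x a =
      (∑ j ∈ Finset.range (k + 1), α ^ j) * r x a + γ * mdpP P (w k) x a + Ef (k + 1) x a) :
    ∀ k x a,
      (∑ j ∈ Finset.range k, α ^ j) * Qs x a - sq k x a
        + (∑ j ∈ Finset.range k, γ ^ j * ((fun qf => Ppi P pstar qf)^[j] (Ef (k - j))) x a)
      ≤ H * (∑ j ∈ Finset.range k, γ ^ (k - j) * α ^ j) := by
  intro k
  induction k with
  | zero => intro x a; simp [hs0]
  | succ k ih =>
    intro x a
    have hA1 : (∑ j ∈ Finset.range (k + 1), α ^ j)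
        = (∑ j ∈ Finset.range k, α ^ j) + α ^ k := Finset.sum_range_succ _ _
    -- sum recursion
    have hSU : (∑ j ∈ Finset.range (k + 1),
          γ ^ j * ((fun qf => Ppi P pstar qf)^[j] (Ef (k + 1 - j))) x a)
        = Ef (k + 1) x a + γ * Ppi P pstar
            (fun x a => ∑ j ∈ Finset.range k,
              γ ^ j * ((fun qf => Ppi P pstar qf)^[j] (Ef (k - j))) x a) x a := by
      rw [Finset.sum_range_succ']
      simp only [pow_zero, one_mul, Nat.sub_zero, Function.iterate_zero_apply]
      rw [add_comm]
      congr 1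
      rw [Ppi_sum]
      rw [Finset.mul_sum]
      refine Finset.sum_congr rfl fun j hj => ?_
      rw [Nat.succ_sub_succ, Function.iterate_succ_apply']
      ring
    -- the inner state-value function
    set Ak := ∑ j ∈ Finset.range k, α ^ j with hAk
    set Aγk := ∑ j ∈ Finset.range k, γ ^ (k - j) * α ^ j with hAγk
    set SUk : S → A → ℝ := fun x a => ∑ j ∈ Finset.range k,
      γ ^ j * ((fun qf => Ppi P pstar qf)^[j] (Ef (k - j))) x a with hSUk
    have hAγ1 : (∑ j ∈ Finset.range (k + 1), γ ^ (k + 1 - j) * α ^ j)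
        = γ * α ^ k + γ * Aγk := by
      rw [Finset.sum_range_succ, hAγk, Finset.mul_sum]
      rw [Nat.add_sub_cancel_left, pow_one, add_comm]
      congr 1
      refine Finset.sum_congr rfl fun j hj => ?_
      have h2 : k + 1 - j = (k - j) + 1 := Nat.succ_sub (Finset.mem_range.mp hj).le
      rw [h2, pow_succ']
      ring
    set Vs : S → ℝ := polAct pstar Qs with hVs
    have key : (∑ j ∈ Finset.range (k + 1), α ^ j) * Qs x a - sq (k + 1) x a
        + (∑ j ∈ Finset.range (k + 1),
            γ ^ j * ((fun qf => Ppi P pstar qf)^[j] (Ef (k + 1 - j))) x a)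
        = γ * mdpP P (fun z => (Ak + α ^ k) * Vs z + (-1) * w k z
            + 1 * polAct pstar SUk z) x a := by
      have e2 := hQfix x a
      have e3 := mdpP_lin3 P (Ak + α ^ k) (-1) 1 Vs (w k) (polAct pstar SUk) x a
      have e4 : Ppi P pstar SUk x a = mdpP P (polAct pstar SUk) x a := rfl
      rw [hclosed k x a, hSU, hA1, e3, ← e4]
      conv_lhs => rw [e2]
      ring
    have hinner : ∀ z, (Ak + α ^ k) * Vs z + (-1) * w k z + 1 * polAct pstar SUk z
        ≤ H * Aγk + α ^ k * H := by
      intro z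
      have i1 : polAct pstar (fun x a => Ak * Qs x a + (-1) * sq k x a + 1 * SUk x a) z
          = Ak * Vs z + (-1) * polAct pstar (sq k) z + 1 * polAct pstar SUk z :=
        polAct_lin3 pstar Ak (-1) 1 Qs (sq k) SUk z
      have i2 : polAct pstar (fun x a => Ak * Qs x a + (-1) * sq k x a + 1 * SUk x a) z
          ≤ H * Aγk := by
        refine wsum_le_const (fun b => hpstar.1 z b) (hpstar.2 z) fun b => ?_
        have := ih z b
        simp only []
        linarith
      have i3 : polAct pstar (sq k) z ≤ w k z := by
        rw [hwp k z]
        exact wsum_le_const (fun b => hpstar.1 z b) (hpstar.2 z) fun b => hgr k z b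
      have i4 : Vs z ≤ H := by
        have habs : |Vs z| ≤ H :=
          abs_wsum_le (fun b => hpstar.1 z b) (hpstar.2 z) fun b => hQb z b
        exact (abs_le.mp habs).2
      have i5 : α ^ k * Vs z ≤ α ^ k * H := mul_le_mul_of_nonneg_left i4 (pow_nonneg hα0 k)
      linarith
    have hmd : mdpP P (fun z => (Ak + α ^ k) * Vs z + (-1) * w k z
        + 1 * polAct pstar SUk z) x a ≤ H * Aγk + α ^ k * H :=
      wsum_le_const (fun z => hP.1 x a z) (hP.2 x a) hinner
    rw [key, hAγ1]
    nlinarith [mul_le_mul_of_nonneg_left hmd hγ0]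

include hP hγ0 hα0 in
lemma claimL
    {uu : ℕ → S → A → ℝ} {H : ℝ}
    (huu : ∀ k x a, uu (k + 1) x a
      = r x a + γ * mdpP P (polAct (detPol (pol k)) (uu k)) x a)
    (hub : ∀ k z b, |uu k z b| ≤ H)
    (hs0 : ∀ x a, sq 0 x a = 0)
    (hwp : ∀ k x, w k x = sq k x (pol k x))
    (hclosed : ∀ k x a, sq (k + 1) x a =
      (∑ j ∈ Finset.range (k + 1), α ^ j) * r x a + γ * mdpP P (w k) x a + Ef (k + 1) x a) :
    ∀ k x a,
      sq k x a - (∑ j ∈ Finset.range k, α ^ j) * uu k x a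
        - (∑ j ∈ Finset.range k,
            γ ^ j * (PprodN P (fun i => detPol (pol i)) (k - j) j (Ef (k - j))) x a)
      ≤ H * (∑ j ∈ Finset.range k, γ ^ (k - j) * α ^ j) := by
  intro k
  induction k with
  | zero => intro x a; simp [hs0]
  | succ k ih =>
    intro x a
    have hA1 : (∑ j ∈ Finset.range (k + 1), α ^ j)
        = (∑ j ∈ Finset.range k, α ^ j) + α ^ k := Finset.sum_range_succ _ _
    have hSL : (∑ j ∈ Finset.range (k + 1),
          γ ^ j * (PprodN P (fun i => detPol (pol i)) (k + 1 - j) j (Ef (k + 1 - j))) x a)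
        = Ef (k + 1) x a + γ * Ppi P (detPol (pol k))
            (fun x a => ∑ j ∈ Finset.range k,
              γ ^ j * (PprodN P (fun i => detPol (pol i)) (k - j) j (Ef (k - j))) x a) x a := by
      rw [Finset.sum_range_succ']
      simp only [pow_zero, one_mul, Nat.sub_zero]
      rw [show PprodN P (fun i => detPol (pol i)) (k + 1) 0 (Ef (k + 1)) = Ef (k + 1) from rfl]
      rw [add_comm]
      congr 1
      rw [Ppi_sum, Finset.mul_sum]
      refine Finset.sum_congr rfl fun j hj => ?_
      have h2 : k + 1 - (j + 1) = k - j := Nat.succ_sub_succ k j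
      have h3 : (k - j) + j = k := Nat.sub_add_cancel (Finset.mem_range.mp hj).le
      rw [h2]
      have h4 : PprodN P (fun i => detPol (pol i)) (k - j) (j + 1) (Ef (k - j))
          = Ppi P (detPol (pol ((k - j) + j)))
              (PprodN P (fun i => detPol (pol i)) (k - j) j (Ef (k - j))) := rfl
      rw [h4, h3, pow_succ']
      ring
    set Ak := ∑ j ∈ Finset.range k, α ^ j with hAk
    set Aγk := ∑ j ∈ Finset.range k, γ ^ (k - j) * α ^ j with hAγk
    set SLk : S → A → ℝ := fun x a => ∑ j ∈ Finset.range k,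
      γ ^ j * (PprodN P (fun i => detPol (pol i)) (k - j) j (Ef (k - j))) x a with hSLk
    have hAγ1 : (∑ j ∈ Finset.range (k + 1), γ ^ (k + 1 - j) * α ^ j)
        = γ * α ^ k + γ * Aγk := by
      rw [Finset.sum_range_succ, hAγk, Finset.mul_sum]
      rw [Nat.add_sub_cancel_left, pow_one, add_comm]
      congr 1
      refine Finset.sum_congr rfl fun j hj => ?_
      have h2 : k + 1 - j = (k - j) + 1 := Nat.succ_sub (Finset.mem_range.mp hj).le
      rw [h2, pow_succ']
      ring
    have key : sq (k + 1) x a - (∑ j ∈ Finset.range (k + 1), α ^ j) * uu (k + 1) x a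
        - (∑ j ∈ Finset.range (k + 1),
            γ ^ j * (PprodN P (fun i => detPol (pol i)) (k + 1 - j) j (Ef (k + 1 - j))) x a)
        = γ * mdpP P (fun z => 1 * w k z + (-(Ak + α ^ k)) * polAct (detPol (pol k)) (uu k) z
            + (-1) * polAct (detPol (pol k)) SLk z) x a := by
      have e2 := huu k x a
      have e3 := mdpP_lin3 P 1 (-(Ak + α ^ k)) (-1) (w k)
        (polAct (detPol (pol k)) (uu k)) (polAct (detPol (pol k)) SLk) x a
      have e4 : Ppi P (detPol (pol k)) SLk x a
          = mdpP P (polAct (detPol (pol k)) SLk) x a := rfl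
      rw [hclosed k x a, hSL, hA1, e3, ← e4, e2]
      ring
    have hinner : ∀ z, 1 * w k z + (-(Ak + α ^ k)) * polAct (detPol (pol k)) (uu k) z
        + (-1) * polAct (detPol (pol k)) SLk z ≤ H * Aγk + α ^ k * H := by
      intro z
      have hdp := detPol_policy (A := A) (pol k)
      have i0 : w k z = polAct (detPol (pol k)) (sq k) z := by
        rw [polAct_det, hwp k z]
      have i1 : polAct (detPol (pol k)) (fun x a => 1 * sq k x a + (-Ak) * uu k x a
            + (-1) * SLk x a) z
          = 1 * polAct (detPol (pol k)) (sq k) z + (-Ak) * polAct (detPol (pol k)) (uu k) z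
            + (-1) * polAct (detPol (pol k)) SLk z :=
        polAct_lin3 _ 1 (-Ak) (-1) (sq k) (uu k) SLk z
      have i2 : polAct (detPol (pol k)) (fun x a => 1 * sq k x a + (-Ak) * uu k x a
            + (-1) * SLk x a) z ≤ H * Aγk := by
        refine wsum_le_const (fun b => hdp.1 z b) (hdp.2 z) fun b => ?_
        have := ih z b
        simp only []
        linarith
      have i4 : |polAct (detPol (pol k)) (uu k) z| ≤ H :=
        abs_wsum_le (fun b => hdp.1 z b) (hdp.2 z) fun b => hub k z b
      have i5 : α ^ k * (-polAct (detPol (pol k)) (uu k) z) ≤ α ^ k * H :=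
        mul_le_mul_of_nonneg_left (by linarith [(abs_le.mp i4).1]) (pow_nonneg hα0 k)
      linarith
    have hmd : mdpP P (fun z => 1 * w k z + (-(Ak + α ^ k)) * polAct (detPol (pol k)) (uu k) z
        + (-1) * polAct (detPol (pol k)) SLk z) x a ≤ H * Aγk + α ^ k * H :=
      wsum_le_const (fun z => hP.1 x a z) (hP.2 x a) hinner
    rw [key, hAγ1]
    nlinarith [mul_le_mul_of_nonneg_left hmd hγ0]

include hP hγ0 hγ1 in
lemma qstar_le {Qpol : (S → A → ℝ) → S → A → ℝ}
    (hQ : ∀ po, IsPolicy po → bellmanOp P r γ po (Qpol po) = Qpol po)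
    {pstar : S → A → ℝ} (hpstar : IsPolicy pstar)
    (hopt : ∀ po, IsPolicy po → ∀ x, polAct po (Qpol po) x ≤ polAct pstar (Qpol pstar) x) :
    ∀ x b, Qpol pstar x b ≤ polAct pstar (Qpol pstar) x := by
  classical
  have hchoice : ∀ x : S, ∃ a0 : A, ∀ a, Qpol pstar x a ≤ Qpol pstar x a0 := fun x =>
    Finite.exists_max _
  choose d hd using hchoice
  have hdp := detPol_policy (A := A) d
  have hfixg : ∀ x a, Qpol (detPol d) x a
      = r x a + γ * mdpP P (polAct (detPol d) (Qpol (detPol d))) x a := fun x a =>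
    (congrFun (congrFun (hQ _ hdp) x) a).symm
  have hfixs : ∀ x a, Qpol pstar x a
      = r x a + γ * mdpP P (polAct pstar (Qpol pstar)) x a := fun x a =>
    (congrFun (congrFun (hQ _ hpstar) x) a).symm
  have hsub : ∀ z, polAct (detPol d) (fun x a => Qpol (detPol d) x a - Qpol pstar x a) z
      = Qpol (detPol d) z (d z) - Qpol pstar z (d z) := fun z => polAct_det _ _ z
  have hpos : ∀ x a, 0 ≤ Qpol (detPol d) x a - Qpol pstar x a := by
    refine pos_of_ge hP hγ0 hγ1 hdp _ fun x a => ?_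
    have e1 : Ppi P (detPol d) (fun x a => Qpol (detPol d) x a - Qpol pstar x a) x a
        = mdpP P (fun z => Qpol (detPol d) z (d z) - Qpol pstar z (d z)) x a := by
      unfold Ppi
      congr 1
      exact funext hsub
    have e2 : mdpP P (fun z => Qpol (detPol d) z (d z) - Qpol pstar z (d z)) x a
        ≤ mdpP P (fun z => Qpol (detPol d) z (d z) - polAct pstar (Qpol pstar) z) x a := by
      apply wsum_mono (fun z => hP.1 x a z)
      intro z
      have h5 : polAct pstar (Qpol pstar) z ≤ Qpol pstar z (d z) :=
        wsum_le_const (fun b => hpstar.1 z b) (hpstar.2 z) (fun b => hd z b)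
      linarith
    have e3 : mdpP P (fun z => Qpol (detPol d) z (d z) - polAct pstar (Qpol pstar) z) x a
        = mdpP P (fun z => Qpol (detPol d) z (d z)) x a
          - mdpP P (polAct pstar (Qpol pstar)) x a := by
      unfold mdpP
      rw [← Finset.sum_sub_distrib]
      exact Finset.sum_congr rfl fun z _ => by ring
    have e4 : mdpP P (fun z => Qpol (detPol d) z (d z)) x a
        = mdpP P (polAct (detPol d) (Qpol (detPol d))) x a := by
      congr 1
      funext z
      rw [polAct_det]
    have e5 := hfixg x a
    have e6 := hfixs x a
    have e7 : γ * mdpP P (fun z => Qpol (detPol d) z (d z) - Qpol pstar z (d z)) x a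
        ≤ γ * (mdpP P (fun z => Qpol (detPol d) z (d z)) x a
          - mdpP P (polAct pstar (Qpol pstar)) x a) :=
      mul_le_mul_of_nonneg_left (by rw [← e3]; exact e2) hγ0
    rw [e1]
    rw [e4] at e7
    linarith [e7]
  intro x b
  have h1 : Qpol pstar x b ≤ Qpol pstar x (d x) := hd x b
  have h2 := hpos x (d x)
  have h3 : Qpol (detPol d) x (d x) = polAct (detPol d) (Qpol (detPol d)) x :=
    (polAct_det d _ x).symm
  have h4 := hopt (detPol d) hdp x
  linarith

include hP hγ0 hγ1 in
lemma qpol_le_qstar {Qpol : (S → A → ℝ) → S → A → ℝ}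
    (hQ : ∀ po, IsPolicy po → bellmanOp P r γ po (Qpol po) = Qpol po)
    {pstar : S → A → ℝ} (hpstar : IsPolicy pstar)
    (hopt : ∀ po, IsPolicy po → ∀ x, polAct po (Qpol po) x ≤ polAct pstar (Qpol pstar) x) :
    ∀ po, IsPolicy po → ∀ x a, Qpol po x a ≤ Qpol pstar x a := by
  intro po hpo
  have hql := qstar_le hP hγ0 hγ1 hQ hpstar hopt
  have hfixp : ∀ x a, Qpol po x a
      = r x a + γ * mdpP P (polAct po (Qpol po)) x a := fun x a =>
    (congrFun (congrFun (hQ _ hpo) x) a).symm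
  have hfixs : ∀ x a, Qpol pstar x a
      = r x a + γ * mdpP P (polAct pstar (Qpol pstar)) x a := fun x a =>
    (congrFun (congrFun (hQ _ hpstar) x) a).symm
  have hpos : ∀ x a, 0 ≤ Qpol pstar x a - Qpol po x a := by
    refine pos_of_ge hP hγ0 hγ1 hpo _ fun x a => ?_
    have e1 : Ppi P po (fun x a => Qpol pstar x a - Qpol po x a) x a
        = mdpP P (fun z => polAct po (Qpol pstar) z - polAct po (Qpol po) z) x a := by
      unfold Ppi
      congr 1
      funext z
      unfold polAct
      rw [← Finset.sum_sub_distrib]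
      exact Finset.sum_congr rfl fun b _ => by ring
    have e2 : mdpP P (fun z => polAct po (Qpol pstar) z - polAct po (Qpol po) z) x a
        ≤ mdpP P (fun z => polAct pstar (Qpol pstar) z - polAct po (Qpol po) z) x a := by
      apply wsum_mono (fun z => hP.1 x a z)
      intro z
      have h5 : polAct po (Qpol pstar) z ≤ polAct pstar (Qpol pstar) z :=
        wsum_le_const (fun b => hpo.1 z b) (hpo.2 z) (fun b => hql z b)
      linarith
    have e3 : mdpP P (fun z => polAct pstar (Qpol pstar) z - polAct po (Qpol po) z) x a
        = mdpP P (polAct pstar (Qpol pstar)) x a - mdpP P (polAct po (Qpol po)) x a := by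
      unfold mdpP
      rw [← Finset.sum_sub_distrib]
      exact Finset.sum_congr rfl fun z _ => by ring
    have e5 := hfixp x a
    have e6 := hfixs x a
    have e7 : γ * Ppi P po (fun x a => Qpol pstar x a - Qpol po x a) x a
        ≤ γ * (mdpP P (polAct pstar (Qpol pstar)) x a - mdpP P (polAct po (Qpol po)) x a) := by
      rw [e1]
      exact mul_le_mul_of_nonneg_left (by rw [← e3]; exact e2) hγ0
    linarith
  intro x a
  linarith [hpos x a]
end claims

/-- Lemma 4.1: error propagation for the non-stationary MDVI policy. -/
theorem mdvi_error_propagation_nonstationary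
    (α : ℝ) (hα0 : 0 ≤ α) (hα1 : α < 1)
    (S A : Type) [Fintype S] [Fintype A] [Nonempty S] [Nonempty A] [DecidableEq A]
    (P : S → A → S → ℝ) (hP : IsKernel P)
    (r : S → A → ℝ) (hr : ∀ x a, |r x a| ≤ 1)
    (γ H : ℝ) (hγ0 : 0 ≤ γ) (hγ1 : γ < 1) (hH : H = 1 / (1 - γ))
    (Qpol : (S → A → ℝ) → S → A → ℝ)
    (hQ : ∀ po, IsPolicy po → bellmanOp P r γ po (Qpol po) = Qpol po)
    (pstar : S → A → ℝ) (hpstar : IsPolicy pstar)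
    (hopt : ∀ po, IsPolicy po → ∀ x, polAct po (Qpol po) x ≤ polAct pstar (Qpol pstar) x)
    (K M : ℕ) (hM : 1 ≤ M)
    (y : ℕ → ℕ → S → A → S)
    (w v : ℕ → S → ℝ) (sq qv : ℕ → S → A → ℝ)
    (hs0 : ∀ x a, sq 0 x a = 0) (hw0 : ∀ x, w 0 x = 0)
    (hv : ∀ k x, v k x = w k x - α * w (k - 1) x)
    (hqv : ∀ k x a, qv (k + 1) x a
      = r x a + (γ / (M : ℝ)) * ∑ m ∈ Finset.range M, v k (y k m x a))
    (hsq : ∀ k x a, sq (k + 1) x a = qv (k + 1) x a + α * sq k x a)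
    (hwk : ∀ k x, w (k + 1) x = ⨆ a, sq (k + 1) x a)
    (pol : ℕ → S → A)
    (hgreedy : ∀ k x a, sq k x a ≤ sq k x (pol k x))
    (εf Ef : ℕ → S → A → ℝ)
    (hεf : ∀ k x a, εf (k + 1) x a
      = (γ / (M : ℝ)) * ∑ m ∈ Finset.range M, v k (y k m x a) - γ * mdpP P (v k) x a)
    (hEf : ∀ k x a, Ef k x a = ∑ j ∈ Finset.range k, α ^ (k - 1 - j) * εf (j + 1) x a)
    (u : ℕ → S → A → ℝ)
    (hu0 : u 0 = Qpol (detPol (pol 0)))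
    (hurec : ∀ k, u (k + 1) = bellmanOp P r γ (detPol (pol (k + 1))) (u k))
    :
    ∀ k ∈ Finset.Icc 1 K, ∀ x,
      0 ≤ polAct pstar (Qpol pstar) x - polAct (detPol (pol k)) (u (k - 1)) x ∧
      polAct pstar (Qpol pstar) x - polAct (detPol (pol k)) (u (k - 1)) x ≤
        (1 / ((1 : ℝ) / (1 - α))) * ∑ j ∈ Finset.range k, γ ^ j *
          (polAct (detPol (pol k))
              (PprodN P (fun i => detPol (pol i)) (k - j) j (Ef (k - j))) x
            - polAct pstar ((fun qf => Ppi P pstar qf)^[j] (Ef (k - j))) x)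
        + 2 * H * (α ^ k +
            (∑ j ∈ Finset.range k, γ ^ (k - j) * α ^ j) / ((1 : ℝ) / (1 - α))) := by
  classical
  -- basic scalar facts
  have hγne : (0:ℝ) < 1 - γ := by linarith
  have hαne : (0:ℝ) < 1 - α := by linarith
  have h1γH : 1 + γ * H = H := by rw [hH]; field_simp; ring
  -- value of greedy action equals sup
  have hwp : ∀ k x, w k x = sq k x (pol k x) := by
    intro k x
    cases k with
    | zero => rw [hw0, hs0]
    | succ k =>
      rw [hwk k x]
      refine le_antisymm (ciSup_le fun a => hgreedy (k + 1) x a) ?_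
      exact le_ciSup (Set.Finite.bddAbove (Set.finite_range _)) (pol (k + 1) x)
  -- E recursion
  have hEfrec : ∀ k x a, Ef (k + 2) x a = εf (k + 2) x a + α * Ef (k + 1) x a := by
    intro k x a
    rw [hEf (k + 2), hEf (k + 1), Finset.sum_range_succ]
    have h0 : k + 2 - 1 - (k + 1) = 0 := by omega
    rw [h0, pow_zero, one_mul, Finset.mul_sum, add_comm]
    congr 1
    refine Finset.sum_congr rfl fun j hj => ?_
    have h2 : k + 2 - 1 - j = (k + 1 - 1 - j) + 1 := by
      have := Finset.mem_range.mp hj; omega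
    rw [h2, pow_succ']
    ring
  have hv0 : ∀ z, v 0 z = 0 := by
    intro z
    rw [hv]
    simp [hw0]
  -- closed form of sq
  have hclosed : ∀ k x a, sq (k + 1) x a =
      (∑ j ∈ Finset.range (k + 1), α ^ j) * r x a + γ * mdpP P (w k) x a + Ef (k + 1) x a := by
    intro k
    induction k with
    | zero =>
      intro x a
      have h1 := hsq 0 x a
      have h2 := hqv 0 x a
      have h3 := hεf 0 x a
      have h4 : Ef 1 x a = εf 1 x a := by rw [hEf]; simp
      have h5 : mdpP P (v 0) x a = 0 := by unfold mdpP; simp [hv0]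
      have h6 : mdpP P (w 0) x a = 0 := by unfold mdpP; simp [hw0]
      rw [h1, h2, hs0, h4, h6]
      rw [h5] at h3
      norm_num
      linarith
    | succ k ih =>
      intro x a
      have h1 := hsq (k + 1) x a
      have h2 := hqv (k + 1) x a
      have h3 := hεf (k + 1) x a
      have h5 : mdpP P (v (k + 1)) x a = mdpP P (w (k + 1)) x a - α * mdpP P (w k) x a := by
        have hvz : ∀ z, v (k + 1) z = w (k + 1) z - α * w k z := by
          intro z
          rw [hv]
          simp
        unfold mdpP
        rw [Finset.mul_sum, ← Finset.sum_sub_distrib]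
        exact Finset.sum_congr rfl fun z _ => by rw [hvz z]; ring
      have h6 := hEfrec k x a
      have h7 : (∑ j ∈ Finset.range (k + 2), α ^ j)
          = 1 + α * ∑ j ∈ Finset.range (k + 1), α ^ j := by rw [geom_sum_succ]; ring
      have h8 := ih x a
      rw [h5] at h3
      rw [h1, h2, h7, h6, h8]
      linarith
  -- the shifted value sequence of the non-stationary policy
  have huu' : ∀ k x a, (fun j => u (j - 1)) (k + 1) x a
      = r x a + γ * mdpP P (polAct (detPol (pol k)) ((fun j => u (j - 1)) k)) x a := by
    intro k x a
    cases k with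
    | zero =>
      show u 0 x a = r x a + γ * mdpP P (polAct (detPol (pol 0)) (u 0)) x a
      rw [hu0]
      exact (congrFun (congrFun (hQ (detPol (pol 0)) (detPol_policy _)) x) a).symm
    | succ j =>
      show u (j + 1) x a = r x a + γ * mdpP P (polAct (detPol (pol (j + 1))) (u j)) x a
      exact congrFun (congrFun (hurec j) x) a
  -- uniform bounds
  have hub : ∀ k x a, |u k x a| ≤ H := by
    intro k
    induction k with
    | zero =>
      intro x a
      rw [hu0]
      exact qpol_bound hP hγ0 hγ1 hr hH (detPol_policy _) (hQ _ (detPol_policy _)) x a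
    | succ k ih =>
      intro x a
      have h1 : u (k + 1) x a
          = r x a + γ * mdpP P (polAct (detPol (pol (k + 1))) (u k)) x a :=
        congrFun (congrFun (hurec k) x) a
      have hdp := detPol_policy (A := A) (pol (k + 1))
      have h2 : |mdpP P (polAct (detPol (pol (k + 1))) (u k)) x a| ≤ H := by
        refine abs_wsum_le (fun z => hP.1 x a z) (hP.2 x a) fun z => ?_
        exact abs_wsum_le (fun b => hdp.1 z b) (hdp.2 z) fun b => ih z b
      rw [h1]
      calc |r x a + γ * mdpP P (polAct (detPol (pol (k + 1))) (u k)) x a|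
          ≤ |r x a| + |γ * mdpP P (polAct (detPol (pol (k + 1))) (u k)) x a| := abs_add_le _ _
        _ ≤ 1 + γ * H := by
            have h3 : |γ * mdpP P (polAct (detPol (pol (k + 1))) (u k)) x a| ≤ γ * H := by
              rw [abs_mul, abs_of_nonneg hγ0]
              exact mul_le_mul_of_nonneg_left h2 hγ0
            linarith [hr x a]
        _ = H := h1γH
  have huub : ∀ k z b, |(fun j => u (j - 1)) k z b| ≤ H := fun k z b => hub (k - 1) z b
  have hQsb : ∀ x a, |Qpol pstar x a| ≤ H :=
    qpol_bound hP hγ0 hγ1 hr hH hpstar (hQ pstar hpstar)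
  have hfixs : ∀ x a, Qpol pstar x a
      = r x a + γ * mdpP P (polAct pstar (Qpol pstar)) x a := fun x a =>
    (congrFun (congrFun (hQ pstar hpstar) x) a).symm
  have hql := qstar_le hP hγ0 hγ1 hQ hpstar hopt
  have hqps := qpol_le_qstar hP hγ0 hγ1 hQ hpstar hopt
  -- u is dominated by the optimal Q-function
  have hule : ∀ k x a, u k x a ≤ Qpol pstar x a := by
    intro k
    induction k with
    | zero =>
      intro x a
      rw [hu0]
      exact hqps (detPol (pol 0)) (detPol_policy _) x a
    | succ k ih =>
      intro x a
      have h1 : u (k + 1) x a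
          = r x a + γ * mdpP P (polAct (detPol (pol (k + 1))) (u k)) x a :=
        congrFun (congrFun (hurec k) x) a
      have p1 : ∀ z, polAct (detPol (pol (k + 1))) (u k) z ≤ polAct pstar (Qpol pstar) z := by
        intro z
        rw [polAct_det]
        exact (ih z (pol (k + 1) z)).trans (hql z (pol (k + 1) z))
      have p2 : mdpP P (polAct (detPol (pol (k + 1))) (u k)) x a
          ≤ mdpP P (polAct pstar (Qpol pstar)) x a :=
        wsum_mono (fun z => hP.1 x a z) p1
      have p3 := mul_le_mul_of_nonneg_left p2 hγ0
      linarith [hfixs x a, h1]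
  -- the two key claims
  have hclaimU := claimU hP hγ0 hα0 hpstar hfixs hQsb hs0 hwp hgreedy hclosed
  have hclaimL := claimL hP hγ0 hα0 huu' huub hs0 hwp hclosed
  -- assembly
  intro k hk x
  have hk1 : 1 ≤ k := (Finset.mem_Icc.mp hk).1
  have hdp := detPol_policy (A := A) (pol k)
  have hUL : ∀ (x : S) (a : A),
      sq k x a - (∑ j ∈ Finset.range k, α ^ j) * u (k - 1) x a
        - (∑ j ∈ Finset.range k,
            γ ^ j * (PprodN P (fun i => detPol (pol i)) (k - j) j (Ef (k - j))) x a)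
      ≤ H * (∑ j ∈ Finset.range k, γ ^ (k - j) * α ^ j) := hclaimL k
  have hUU := hclaimU k
  -- abbreviations are kept as full terms; derive scalar facts at x
  have gU : polAct pstar (fun x a => (∑ j ∈ Finset.range k, α ^ j) * Qpol pstar x a
        + (-1) * sq k x a
        + 1 * (fun x a => ∑ j ∈ Finset.range k,
            γ ^ j * ((fun qf => Ppi P pstar qf)^[j] (Ef (k - j))) x a) x a) x
      ≤ H * (∑ j ∈ Finset.range k, γ ^ (k - j) * α ^ j) := by
    refine wsum_le_const (fun b => hpstar.1 x b) (hpstar.2 x) fun b => ?_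
    have := hUU x b
    simp only []
    linarith
  have eU := polAct_lin3 pstar (∑ j ∈ Finset.range k, α ^ j) (-1) 1 (Qpol pstar) (sq k)
    (fun x a => ∑ j ∈ Finset.range k,
      γ ^ j * ((fun qf => Ppi P pstar qf)^[j] (Ef (k - j))) x a) x
  have gL : polAct (detPol (pol k)) (fun x a => 1 * sq k x a
        + (-(∑ j ∈ Finset.range k, α ^ j)) * u (k - 1) x a
        + (-1) * (fun x a => ∑ j ∈ Finset.range k,
            γ ^ j * (PprodN P (fun i => detPol (pol i)) (k - j) j (Ef (k - j))) x a) x a) x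
      ≤ H * (∑ j ∈ Finset.range k, γ ^ (k - j) * α ^ j) := by
    refine wsum_le_const (fun b => hdp.1 x b) (hdp.2 x) fun b => ?_
    have := hUL x b
    simp only []
    linarith
  have eL := polAct_lin3 (detPol (pol k)) 1 (-(∑ j ∈ Finset.range k, α ^ j)) (-1) (sq k)
    (u (k - 1))
    (fun x a => ∑ j ∈ Finset.range k,
      γ ^ j * (PprodN P (fun i => detPol (pol i)) (k - j) j (Ef (k - j))) x a) x
  have e3 : polAct pstar (sq k) x ≤ polAct (detPol (pol k)) (sq k) x := by
    rw [polAct_det]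
    exact wsum_le_const (fun b => hpstar.1 x b) (hpstar.2 x) fun b => hgreedy k x b
  have e4 := polAct_sum (detPol (pol k)) (Finset.range k) (fun j => γ ^ j)
    (fun j => PprodN P (fun i => detPol (pol i)) (k - j) j (Ef (k - j))) x
  have e5 := polAct_sum pstar (Finset.range k) (fun j => γ ^ j)
    (fun j => (fun qf => Ppi P pstar qf)^[j] (Ef (k - j))) x
  have e6 : (∑ j ∈ Finset.range k, γ ^ j *
        (polAct (detPol (pol k))
            (PprodN P (fun i => detPol (pol i)) (k - j) j (Ef (k - j))) x
          - polAct pstar ((fun qf => Ppi P pstar qf)^[j] (Ef (k - j))) x))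
      = polAct (detPol (pol k))
          (fun x a => ∑ j ∈ Finset.range k,
            γ ^ j * (PprodN P (fun i => detPol (pol i)) (k - j) j (Ef (k - j))) x a) x
        - polAct pstar
          (fun x a => ∑ j ∈ Finset.range k,
            γ ^ j * ((fun qf => Ppi P pstar qf)^[j] (Ef (k - j))) x a) x := by
    rw [e4, e5, ← Finset.sum_sub_distrib]
    exact Finset.sum_congr rfl fun j _ => by ring
  -- lower bound
  have hUx : polAct (detPol (pol k)) (u (k - 1)) x = u (k - 1) x (pol k x) :=
    polAct_det _ _ x
  have lower : 0 ≤ polAct pstar (Qpol pstar) x - polAct (detPol (pol k)) (u (k - 1)) x := by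
    rw [hUx]
    have := (hule (k - 1) x (pol k x)).trans (hql x (pol k x))
    linarith
  refine ⟨lower, ?_⟩
  -- upper bound
  have hVb : |polAct pstar (Qpol pstar) x| ≤ H :=
    abs_wsum_le (fun b => hpstar.1 x b) (hpstar.2 x) fun b => hQsb x b
  have hUb : |polAct (detPol (pol k)) (u (k - 1)) x| ≤ H :=
    abs_wsum_le (fun b => hdp.1 x b) (hdp.2 x) fun b => hub (k - 1) x b
  have F1 : (∑ j ∈ Finset.range k, α ^ j) *
        (polAct pstar (Qpol pstar) x - polAct (detPol (pol k)) (u (k - 1)) x)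
      ≤ (∑ j ∈ Finset.range k, γ ^ j *
          (polAct (detPol (pol k))
              (PprodN P (fun i => detPol (pol i)) (k - j) j (Ef (k - j))) x
            - polAct pstar ((fun qf => Ppi P pstar qf)^[j] (Ef (k - j))) x))
        + 2 * (H * (∑ j ∈ Finset.range k, γ ^ (k - j) * α ^ j)) := by
    rw [e6]
    nlinarith [gU, eU, gL, eL, e3]
  have F4 : (1 - α) * (∑ j ∈ Finset.range k, α ^ j) = 1 - α ^ k := by
    have h := geom_sum_mul α k
    linear_combination -h
  have hsimp : (1 : ℝ) / ((1 : ℝ) / (1 - α)) = 1 - α := one_div_one_div _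
  have hsimp2 : (∑ j ∈ Finset.range k, γ ^ (k - j) * α ^ j) / ((1 : ℝ) / (1 - α))
      = (∑ j ∈ Finset.range k, γ ^ (k - j) * α ^ j) * (1 - α) := by
    rw [div_div_eq_mul_div, div_one]
  rw [hsimp, hsimp2]
  have m1 := mul_le_mul_of_nonneg_left F1 (le_of_lt hαne)
  have m2 : α ^ k * (polAct pstar (Qpol pstar) x - polAct (detPol (pol k)) (u (k - 1)) x)
      ≤ α ^ k * (2 * H) := by
    refine mul_le_mul_of_nonneg_left ?_ (pow_nonneg hα0 k)
    linarith [(abs_le.mp hVb).2, (abs_le.mp hUb).1]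
  have m3 : (1 - α) * ((∑ j ∈ Finset.range k, α ^ j) *
        (polAct pstar (Qpol pstar) x - polAct (detPol (pol k)) (u (k - 1)) x))
      = (polAct pstar (Qpol pstar) x - polAct (detPol (pol k)) (u (k - 1)) x)
        - α ^ k * (polAct pstar (Qpol pstar) x - polAct (detPol (pol k)) (u (k - 1)) x) := by
    rw [← mul_assoc, F4]
    ring
  nlinarith [m1, m2, m3]
end
end

section
/- (Lemma 4.2, Hoeffding bound on the averaged errors E_k) Let 𝓔₁ be the event that ‖E_k‖_∞ < 3H√(A_∞ι₁/M) for all k ∈ {1,…,K}, where ι₁ := log(8KXA/δ). Then P(𝓔₁ᶜ) ≤ δ/4. -/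
open MeasureTheory ProbabilityTheory Finset Real

noncomputable section

set_option linter.unusedSectionVars false
set_option linter.unnecessarySimpa false
set_option linter.unusedVariables false

/-- `F` depends only on coordinates in `I`. -/
def DepOnF {ι S : Type} (F : (ι → S) → ℝ) (I : Finset ι) : Prop :=
  ∀ c c' : ι → S, (∀ i ∈ I, c i = c' i) → F c = F c'

lemma DepOnF.mono {ι S : Type} {F : (ι → S) → ℝ} {I J : Finset ι} (h : DepOnF F I)
    (hIJ : I ⊆ J) : DepOnF F J := fun c c' hcc => h c c' fun i hi => hcc i (hIJ hi)

lemma DepOnF.update {ι S : Type} [DecidableEq ι] {F : (ι → S) → ℝ} {I : Finset ι}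
    (h : DepOnF F I) (i₀ : ι) (z : S) :
    DepOnF (fun c => F (Function.update c i₀ z)) (I.erase i₀) := by
  intro c c' hcc
  refine h _ _ fun i hi => ?_
  rcases eq_or_ne i i₀ with rfl | hne
  · simp [Function.update]
  · simp only [Function.update, dif_neg hne]
    exact hcc i (Finset.mem_erase.2 ⟨hne, hi⟩)

section Generic

variable {S : Type} [Fintype S] [Nonempty S] [DecidableEq S]
  [MeasurableSpace S] [MeasurableSingletonClass S]
variable {ι : Type} [Countable ι] [DecidableEq ι]
variable {Ω : Type} [MeasurableSpace Ω] {μ : Measure Ω}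
variable {y : ι → Ω → S}

lemma expand_dependsOn {F : (ι → S) → ℝ} (i₀ : ι) (c : ι → S) :
    F c = ∑ z : S, if c i₀ = z then F (Function.update c i₀ z) else 0 := by
  rw [Finset.sum_ite_eq univ (c i₀) (fun z => F (Function.update c i₀ z))]
  simp [Function.update_eq_self]

lemma measurable_of_dependsOn (hy : ∀ i, Measurable (y i))
    (I : Finset ι) (F : (ι → S) → ℝ) (hF : DepOnF F I) :
    Measurable fun ω => F (fun i => y i ω) := by
  induction I using Finset.induction generalizing F with
  | empty =>
    have : ∀ ω, F (fun i => y i ω) = F (fun _ => Classical.arbitrary S) := fun ω =>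
      hF _ _ (by simp)
    simp only [this]; exact measurable_const
  | @insert i₀ I hi₀ ih =>
    have hrw : ∀ ω, F (fun i => y i ω)
        = ∑ z : S, if y i₀ ω = z then F (Function.update (fun i => y i ω) i₀ z) else 0 :=
      fun ω => expand_dependsOn i₀ _
    simp only [hrw]
    refine Finset.measurable_sum _ fun z _ => Measurable.ite ?_ ?_ measurable_const
    · exact (hy i₀) (MeasurableSet.singleton z)
    · refine ih (fun c => F (Function.update c i₀ z)) ?_
      have := hF.update i₀ z
      simpa [Finset.erase_insert hi₀] using this

lemma bound_of_dependsOn (I : Finset ι) (F : (ι → S) → ℝ) (hF : DepOnF F I) :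
    ∃ C : ℝ, ∀ c : ι → S, |F c| ≤ C := by
  induction I using Finset.induction generalizing F with
  | empty =>
    refine ⟨|F (fun _ => Classical.arbitrary S)|, fun c => ?_⟩
    rw [hF c (fun _ => Classical.arbitrary S) (by simp)]
  | @insert i₀ I hi₀ ih =>
    have h : ∀ z, DepOnF (fun c => F (Function.update c i₀ z)) I := by
      intro z
      have := hF.update i₀ z
      simpa [Finset.erase_insert hi₀] using this
    choose C hC using fun z => ih _ (h z)
    refine ⟨∑ z : S, |C z|, fun c => ?_⟩
    have h1 : F c = F (Function.update c i₀ (c i₀)) := by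
      rw [Function.update_eq_self]
    rw [h1]
    calc |F (Function.update c i₀ (c i₀))| ≤ C (c i₀) := hC _ _
      _ ≤ |C (c i₀)| := le_abs_self _
      _ ≤ ∑ z : S, |C z| :=
        Finset.single_le_sum (fun z _ => abs_nonneg (C z)) (Finset.mem_univ _)

lemma integrable_of_bdd [IsFiniteMeasure μ] {f : Ω → ℝ} (hm : Measurable f) (C : ℝ)
    (hC : ∀ ω, |f ω| ≤ C) : Integrable f μ :=
  (integrable_const C).mono' hm.aestronglyMeasurable
    (ae_of_all _ fun ω => by simpa [Real.norm_eq_abs] using hC ω)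

lemma integral_peel [IsProbabilityMeasure μ] (hy : ∀ i, Measurable (y i))
    (hyind : iIndepFun y μ)
    (I : Finset ι) (F : (ι → S) → ℝ) (hF : DepOnF F I) (i₀ : ι) :
    ∫ ω, F (fun i => y i ω) ∂μ
      = ∑ z : S, (μ {ω | y i₀ ω = z}).toReal *
          ∫ ω, F (Function.update (fun i => y i ω) i₀ z) ∂μ := by
  obtain ⟨C, hC⟩ := bound_of_dependsOn I F hF
  have hFzdep : ∀ z, DepOnF (fun c => F (Function.update c i₀ z)) (I.erase i₀) :=
    fun z => hF.update i₀ z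
  have hFzmeas : ∀ z : S, Measurable fun ω => F (Function.update (fun i => y i ω) i₀ z) :=
    fun z => measurable_of_dependsOn hy _ _ (hFzdep z)
  have hsetmeas : ∀ z : S, MeasurableSet {ω | y i₀ ω = z} :=
    fun z => (hy i₀) (MeasurableSet.singleton z)
  have hrw : ∀ ω, F (fun i => y i ω)
      = ∑ z : S, if y i₀ ω = z then F (Function.update (fun i => y i ω) i₀ z) else 0 :=
    fun ω => expand_dependsOn i₀ _
  have hterm_meas : ∀ z : S, Measurable fun ω =>
      if y i₀ ω = z then F (Function.update (fun i => y i ω) i₀ z) else 0 :=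
    fun z => Measurable.ite (hsetmeas z) (hFzmeas z) measurable_const
  have hterm_int : ∀ z : S, Integrable (fun ω =>
      if y i₀ ω = z then F (Function.update (fun i => y i ω) i₀ z) else 0) μ := by
    intro z
    refine integrable_of_bdd (hterm_meas z) (|C|) fun ω => ?_
    split_ifs
    · exact (hC _).trans (le_abs_self C)
    · simpa using abs_nonneg C
  calc ∫ ω, F (fun i => y i ω) ∂μ
      = ∫ ω, ∑ z : S, (if y i₀ ω = z then F (Function.update (fun i => y i ω) i₀ z) else 0) ∂μ := by
        exact integral_congr_ae (ae_of_all _ hrw)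
    _ = ∑ z : S, ∫ ω, (if y i₀ ω = z then F (Function.update (fun i => y i ω) i₀ z) else 0) ∂μ :=
        integral_finset_sum _ fun z _ => hterm_int z
    _ = ∑ z : S, (μ {ω | y i₀ ω = z}).toReal *
          ∫ ω, F (Function.update (fun i => y i ω) i₀ z) ∂μ := by
        refine Finset.sum_congr rfl fun z _ => ?_
        have hsplit : (fun ω => if y i₀ ω = z then F (Function.update (fun i => y i ω) i₀ z) else 0)
            = fun ω => (if y i₀ ω = z then (1:ℝ) else 0)
                * F (Function.update (fun i => y i ω) i₀ z) := by
          funext ω; split_ifs <;> ring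
        rw [hsplit]
        -- independence
        have hIF := hyind.indepFun_finset {i₀} (I.erase i₀)
          (Finset.disjoint_left.2 (by simp)) hy
        set φ : (({i₀} : Finset ι) → S) → ℝ :=
          fun g => if g ⟨i₀, Finset.mem_singleton_self _⟩ = z then 1 else 0 with hφdef
        set ψ : ({i // i ∈ I.erase i₀} → S) → ℝ :=
          fun g => F (Function.update
            (fun i => if h : i ∈ I.erase i₀ then g ⟨i, h⟩ else Classical.arbitrary S) i₀ z)
            with hψdef
        have hφm : Measurable φ := measurable_of_countable _
        have hψm : Measurable ψ := measurable_of_countable _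
        have hind2 : IndepFun (fun ω => if y i₀ ω = z then (1:ℝ) else 0)
            (fun ω => F (Function.update (fun i => y i ω) i₀ z)) μ := by
          have := (hIF.comp hφm hψm)
          have e1 : (φ ∘ fun ω (i : ({i₀} : Finset ι)) => y i ω)
              = fun ω => if y i₀ ω = z then (1:ℝ) else 0 := rfl
          have e2 : (ψ ∘ fun ω (i : (I.erase i₀ : Finset ι)) => y i ω)
              = fun ω => F (Function.update (fun i => y i ω) i₀ z) := by
            funext ω
            refine hF _ _ fun i hi => ?_
            rcases eq_or_ne i i₀ with rfl | hne
            · simp [Function.update]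
            · simp only [Function.comp, ψ, Function.update, dif_neg hne]
              rw [dif_pos (Finset.mem_erase.2 ⟨hne, hi⟩)]
          rwa [e1, e2] at this
        rw [hind2.integral_fun_mul_eq_mul_integral ((Measurable.ite (hsetmeas z) measurable_const
          measurable_const).aestronglyMeasurable) (hFzmeas z).aestronglyMeasurable]
        congr 1
        have hrw2 : (fun ω => if y i₀ ω = z then (1:ℝ) else 0)
            = Set.indicator {ω | y i₀ ω = z} (1 : Ω → ℝ) := by
          funext ω; by_cases h : y i₀ ω = z <;>
            simp [Set.indicator_apply, h, Set.mem_setOf_eq]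
        rw [hrw2]
        exact integral_indicator_one (hsetmeas z)


end Generic

lemma exp_chord {B t d : ℝ} (hB : 0 < B) (hd : |d| ≤ B) :
    Real.exp (t * d) ≤ (B - d) / (2 * B) * Real.exp (-(t * B))
      + (B + d) / (2 * B) * Real.exp (t * B) := by
  obtain ⟨hd1, hd2⟩ := abs_le.1 hd
  have hθ0 : 0 ≤ (B - d) / (2 * B) := div_nonneg (by linarith) (by linarith)
  have hθ0' : 0 ≤ (B + d) / (2 * B) := div_nonneg (by linarith) (by linarith)
  have hsum : (B - d) / (2 * B) + (B + d) / (2 * B) = 1 := by field_simp; ring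
  have := convexOn_exp.2 (Set.mem_univ (-(t * B))) (Set.mem_univ (t * B)) hθ0 hθ0' hsum
  have h2B : (2 * B) ≠ 0 := by positivity
  have harg : (B - d) / (2 * B) * (-(t * B)) + (B + d) / (2 * B) * (t * B) = t * d := by
    rw [div_mul_eq_mul_div, div_mul_eq_mul_div, ← add_div, div_eq_iff h2B]
    ring
  simp only [smul_eq_mul] at this
  rwa [harg] at this

lemma mdpP_abs_le {S A : Type} [Fintype S] {P : S → A → S → ℝ} (hP : IsKernel P)
    {u : S → ℝ} {H : ℝ} (hu : ∀ z, |u z| ≤ H) (x : S) (a : A) : |mdpP P u x a| ≤ H := by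
  have h1 : |mdpP P u x a| ≤ ∑ z, P x a z * |u z| := by
    refine (Finset.abs_sum_le_sum_abs _ _).trans ?_
    refine Finset.sum_le_sum fun z _ => ?_
    rw [abs_mul, abs_of_nonneg (hP.1 x a z)]
  refine h1.trans ?_
  calc ∑ z, P x a z * |u z| ≤ ∑ z, P x a z * H :=
        Finset.sum_le_sum fun z _ => mul_le_mul_of_nonneg_left (hu z) (hP.1 x a z)
    _ = H := by rw [← Finset.sum_mul, hP.2 x a, one_mul]

lemma sample_mgf_le {S A : Type} [Fintype S] {P : S → A → S → ℝ} (hP : IsKernel P)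
    {H : ℝ} (hH0 : 0 < H) (x : S) (a : A) (u : S → ℝ) (hu : ∀ z, |u z| ≤ H) (t : ℝ) :
    ∑ z, P x a z * Real.exp (t * (u z - mdpP P u x a)) ≤ Real.exp (2 * t ^ 2 * H ^ 2) := by
  set m := mdpP P u x a with hm
  have hmH : |m| ≤ H := mdpP_abs_le hP hu x a
  set B := 2 * H with hBdef
  have hB : 0 < B := by positivity
  have hd : ∀ z, |u z - m| ≤ B := fun z => by
    have := abs_le.1 (hu z); have := abs_le.1 hmH
    rw [abs_le]; constructor <;> [skip; skip] <;>
      · simp only [hBdef]; cases' abs_le.1 (hu z) with h1 h2; cases' abs_le.1 hmH with h3 h4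
        linarith
  calc ∑ z, P x a z * Real.exp (t * (u z - m))
      ≤ ∑ z, P x a z * ((B - (u z - m)) / (2 * B) * Real.exp (-(t * B))
          + (B + (u z - m)) / (2 * B) * Real.exp (t * B)) := by
        refine Finset.sum_le_sum fun z _ => ?_
        exact mul_le_mul_of_nonneg_left (exp_chord hB (hd z)) (hP.1 x a z)
    _ = (∑ z, P x a z * ((B - (u z - m)) / (2 * B))) * Real.exp (-(t * B))
        + (∑ z, P x a z * ((B + (u z - m)) / (2 * B))) * Real.exp (t * B) := by
        rw [Finset.sum_mul, Finset.sum_mul, ← Finset.sum_add_distrib]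
        refine Finset.sum_congr rfl fun z _ => by ring
    _ = (1 / 2) * Real.exp (-(t * B)) + (1 / 2) * Real.exp (t * B) := by
        have e1 : ∑ z, P x a z * ((B - (u z - m)) / (2 * B))
            = (∑ z, (P x a z * B - P x a z * u z + P x a z * m)) / (2 * B) := by
          rw [Finset.sum_div]; exact Finset.sum_congr rfl fun z _ => by field_simp; ring
        have e2 : ∑ z, P x a z * ((B + (u z - m)) / (2 * B))
            = (∑ z, (P x a z * B + P x a z * u z - P x a z * m)) / (2 * B) := by
          rw [Finset.sum_div]; exact Finset.sum_congr rfl fun z _ => by field_simp; ring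
        have hPu : ∑ z, P x a z * u z = m := rfl
        have hPB : ∑ z, P x a z * B = B := by rw [← Finset.sum_mul, hP.2 x a, one_mul]
        have hPm : ∑ z, P x a z * m = m := by rw [← Finset.sum_mul, hP.2 x a, one_mul]
        have s1 : ∑ z, (P x a z * B - P x a z * u z + P x a z * m) = B := by
          rw [Finset.sum_add_distrib, Finset.sum_sub_distrib, hPu, hPB, hPm]; ring
        have s2 : ∑ z, (P x a z * B + P x a z * u z - P x a z * m) = B := by
          rw [Finset.sum_sub_distrib, Finset.sum_add_distrib, hPu, hPB, hPm]; ring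
        have hhalf : B / (2 * B) = 1 / 2 := by
          rw [div_eq_div_iff (by positivity) (by norm_num)]; ring
        rw [e1, e2, s1, s2, hhalf]
    _ = Real.cosh (t * B) := by rw [Real.cosh_eq]; ring
    _ ≤ Real.exp ((t * B) ^ 2 / 2) := Real.cosh_le_exp_half_sq _
    _ = Real.exp (2 * t ^ 2 * H ^ 2) := by congr 1; rw [hBdef]; ring


lemma abs_ciSup_sub_mul_ciSup {A : Type} [Fintype A] [Nonempty A] (f g : A → ℝ) {α C : ℝ}
    (hα : 0 ≤ α) (h : ∀ a, |f a - α * g a| ≤ C) : |(⨆ a, f a) - α * ⨆ a, g a| ≤ C := by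
  obtain ⟨a₀, ha₀⟩ := Finite.exists_max g
  obtain ⟨a₁, ha₁⟩ := Finite.exists_max f
  have hg : (⨆ a, g a) = g a₀ :=
    le_antisymm (ciSup_le ha₀) (le_ciSup (Set.finite_range g).bddAbove a₀)
  have hf : (⨆ a, f a) = f a₁ :=
    le_antisymm (ciSup_le ha₁) (le_ciSup (Set.finite_range f).bddAbove a₁)
  rw [hf, hg, abs_le]
  have h1 := abs_le.1 (h a₀); have h2 := abs_le.1 (h a₁)
  constructor
  · linarith [ha₁ a₀, h1.1]
  · have := mul_le_mul_of_nonneg_left (ha₀ a₁) hα; linarith [h2.2]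

section Canonical

variable {S A : Type} [Fintype S] [Fintype A] [Nonempty S] [Nonempty A]

/-- Pairs `(SQ k, SQ (k-1))` of the canonical configuration-based recursion. -/
def SQp (r : S → A → ℝ) (γ α : ℝ) (M : ℕ) :
    ℕ → (((ℕ × ℕ × S × A) → S) → S → A → ℝ) × (((ℕ × ℕ × S × A) → S) → S → A → ℝ)
  | 0 => (fun _ _ _ => 0, fun _ _ _ => 0)
  | k + 1 =>
    ((fun c x a =>
      (r x a + (γ / (M : ℝ)) * ∑ m ∈ Finset.range M,
        ((⨆ b, (SQp r γ α M k).1 c (c (k, m, x, a)) b)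
          - α * ⨆ b, (SQp r γ α M k).2 c (c (k, m, x, a)) b))
      + α * (SQp r γ α M k).1 c x a), (SQp r γ α M k).1)

def SQc (r : S → A → ℝ) (γ α : ℝ) (M k : ℕ) : ((ℕ × ℕ × S × A) → S) → S → A → ℝ :=
  (SQp r γ α M k).1

def Vc (r : S → A → ℝ) (γ α : ℝ) (M k : ℕ) (c : (ℕ × ℕ × S × A) → S) (z : S) : ℝ :=
  (⨆ a, SQc r γ α M k c z a) - α * ⨆ a, SQc r γ α M (k - 1) c z a

variable {r : S → A → ℝ} {γ α : ℝ} {M : ℕ}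

lemma SQp_snd (k : ℕ) : (SQp r γ α M k).2 = SQc r γ α M (k - 1) := by
  cases k <;> rfl

lemma SQc_zero : SQc r γ α M 0 = fun _ _ _ => 0 := rfl

lemma SQc_succ (k : ℕ) (c : (ℕ × ℕ × S × A) → S) (x : S) (a : A) :
    SQc r γ α M (k + 1) c x a
      = (r x a + (γ / (M : ℝ)) * ∑ m ∈ Finset.range M, Vc r γ α M k c (c (k, m, x, a)))
        + α * SQc r γ α M k c x a := by
  show (SQp r γ α M (k + 1)).1 c x a = _
  rw [SQp, SQp_snd]
  rfl

lemma Vc_abs_le (hr : ∀ x a, |r x a| ≤ 1) (hγ0 : 0 ≤ γ) (hα0 : 0 ≤ α) (hM : 1 ≤ M)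
    {H : ℝ} (hH : 1 + γ * H = H) (hH0 : 0 ≤ H) :
    ∀ (k : ℕ) (c : (ℕ × ℕ × S × A) → S) (z : S), |Vc r γ α M k c z| ≤ H := by
  intro k
  induction k with
  | zero =>
    intro c z
    simp [Vc, SQc_zero, ciSup_const, hH0]
  | succ k ih =>
    intro c z
    have hkey : ∀ a : A, |SQc r γ α M (k+1) c z a - α * SQc r γ α M k c z a| ≤ H := by
      intro a
      rw [SQc_succ]
      have hM0 : (0:ℝ) < (M:ℝ) := by exact_mod_cast hM
      have hsum : |∑ m ∈ Finset.range M, Vc r γ α M k c (c (k, m, z, a))|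
          ≤ (M : ℝ) * H := by
        calc |∑ m ∈ Finset.range M, Vc r γ α M k c (c (k, m, z, a))|
            ≤ ∑ m ∈ Finset.range M, |Vc r γ α M k c (c (k, m, z, a))| :=
              Finset.abs_sum_le_sum_abs _ _
          _ ≤ ∑ _m ∈ Finset.range M, H := Finset.sum_le_sum fun m _ => ih c _
          _ = (M : ℝ) * H := by simp [mul_comm]
      have h2 : |(γ / (M : ℝ)) * ∑ m ∈ Finset.range M, Vc r γ α M k c (c (k, m, z, a))|
          ≤ γ * H := by
        rw [abs_mul, abs_of_nonneg (div_nonneg hγ0 hM0.le)]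
        calc γ / (M:ℝ) * |∑ m ∈ Finset.range M, Vc r γ α M k c (c (k, m, z, a))|
            ≤ γ / (M:ℝ) * ((M:ℝ) * H) := by
              exact mul_le_mul_of_nonneg_left hsum (div_nonneg hγ0 hM0.le)
          _ = γ * H := by field_simp
      calc |r z a + (γ / (M:ℝ)) * ∑ m ∈ Finset.range M, Vc r γ α M k c (c (k, m, z, a))
            + α * SQc r γ α M k c z a - α * SQc r γ α M k c z a|
          = |r z a + (γ / (M:ℝ)) * ∑ m ∈ Finset.range M, Vc r γ α M k c (c (k, m, z, a))| := by
            ring_nf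
        _ ≤ |r z a| + |(γ / (M:ℝ)) * ∑ m ∈ Finset.range M, Vc r γ α M k c (c (k, m, z, a))| :=
            abs_add_le _ _
        _ ≤ 1 + γ * H := add_le_add (hr z a) h2
        _ = H := hH
    have := abs_ciSup_sub_mul_ciSup (fun a => SQc r γ α M (k+1) c z a)
      (fun a => SQc r γ α M k c z a) hα0 hkey
    simpa [Vc] using this

lemma SQc_congr : ∀ (k : ℕ) (c c' : (ℕ × ℕ × S × A) → S),
    (∀ p : ℕ × ℕ × S × A, p.1 < k → p.2.1 < M → c p = c' p) →
    ∀ x a, SQc r γ α M k c x a = SQc r γ α M k c' x a := by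
  intro k
  induction k using Nat.strong_induction_on with
  | _ k ih =>
    match k with
    | 0 => intro c c' h x a; rfl
    | k + 1 =>
      intro c c' h x a
      rw [SQc_succ, SQc_succ]
      have hVc : ∀ m ∈ Finset.range M,
          Vc r γ α M k c (c (k, m, x, a)) = Vc r γ α M k c' (c' (k, m, x, a)) := by
        intro m hm
        have hcz : c (k, m, x, a) = c' (k, m, x, a) :=
          h _ (Nat.lt_succ_self k) (Finset.mem_range.1 hm)
        rw [← hcz]
        unfold Vc
        have e1 : ∀ z b, SQc r γ α M k c z b = SQc r γ α M k c' z b := by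
          intro z b
          exact ih k (Nat.lt_succ_self k) c c'
            (fun p hp hpM => h p (hp.trans (Nat.lt_succ_self k)) hpM) z b
        have e2 : ∀ z b, SQc r γ α M (k-1) c z b = SQc r γ α M (k-1) c' z b := by
          intro z b
          exact ih (k-1) (Nat.lt_succ_of_le (Nat.sub_le k 1)) c c'
            (fun p hp hpM =>
              h p (hp.trans_le ((Nat.sub_le k 1).trans (Nat.le_succ k))) hpM) z b
        simp only [e1, e2]
      rw [Finset.sum_congr rfl hVc,
        ih k (Nat.lt_succ_self k) c c'
          (fun p hp hpM => h p (hp.trans (Nat.lt_succ_self k)) hpM) x a]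

lemma Vc_congr (k : ℕ) (c c' : (ℕ × ℕ × S × A) → S)
    (h : ∀ p : ℕ × ℕ × S × A, p.1 < k → p.2.1 < M → c p = c' p) (z : S) :
    Vc r γ α M k c z = Vc r γ α M k c' z := by
  unfold Vc
  have e1 : ∀ b, SQc r γ α M k c z b = SQc r γ α M k c' z b :=
    fun b => SQc_congr k c c' h z b
  have e2 : ∀ b, SQc r γ α M (k-1) c z b = SQc r γ α M (k-1) c' z b :=
    fun b => SQc_congr (k-1) c c'
      (fun p hp hpM => h p (hp.trans_le (Nat.sub_le k 1)) hpM) z b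
  simp only [e1, e2]

end Canonical


section Chain

variable {S A : Type} [Fintype S] [Fintype A] [Nonempty S] [Nonempty A]
  [DecidableEq S] [DecidableEq A]

open Classical in
/-- Coordinates on which the partial product `Gfun n m` depends. -/
def Iset (M : ℕ) (x : S) (a : A) (n m : ℕ) : Finset (ℕ × ℕ × S × A) :=
  (Finset.range (n+1) ×ˢ Finset.range M ×ˢ Finset.univ ×ˢ Finset.univ).filter
    (fun p => p.1 < n ∨ (p.2.1 < m ∧ p.2.2.1 = x ∧ p.2.2.2 = a))

lemma mem_Iset {M : ℕ} {x : S} {a : A} {n m : ℕ} {p : ℕ × ℕ × S × A} :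
    p ∈ Iset M x a n m ↔ (p.1 ≤ n ∧ p.2.1 < M) ∧
      (p.1 < n ∨ (p.2.1 < m ∧ p.2.2.1 = x ∧ p.2.2.2 = a)) := by
  obtain ⟨k, mm, xx, aa⟩ := p
  simp only [Iset, Finset.mem_filter, Finset.mem_product, Finset.mem_range, Finset.mem_univ,
    and_true, true_and, Nat.lt_succ_iff]

/-- Partial exponential-moment functional. -/
def Gfun (P : S → A → S → ℝ) (r : S → A → ℝ) (γ α : ℝ) (M : ℕ) (coef : ℕ → ℝ)
    (x : S) (a : A) (n m : ℕ) (c : (ℕ × ℕ × S × A) → S) : ℝ :=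
  Real.exp ((∑ j ∈ Finset.range n, coef j *
      ∑ m' ∈ Finset.range M, (Vc r γ α M j c (c (j, m', x, a)) - mdpP P (Vc r γ α M j c) x a))
    + coef n * ∑ m' ∈ Finset.range m,
        (Vc r γ α M n c (c (n, m', x, a)) - mdpP P (Vc r γ α M n c) x a))

variable {P : S → A → S → ℝ} {r : S → A → ℝ} {γ α : ℝ} {M : ℕ} {coef : ℕ → ℝ}

lemma Gfun_nonneg {x : S} {a : A} {n m : ℕ} {c : (ℕ × ℕ × S × A) → S} :
    0 ≤ Gfun P r γ α M coef x a n m c := by unfold Gfun; positivity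

lemma Vc_dependsOn (n : ℕ) (z : S) (M : ℕ) (x : S) (a : A) :
    DepOnF (fun c => Vc r γ α M n c z) (Iset M x a n 0) := by
  intro c c' h
  refine Vc_congr n c c' (fun p hp hpM => h p (mem_Iset.2 ⟨⟨hp.le, hpM⟩, Or.inl hp⟩)) z

lemma Gfun_dependsOn {x : S} {a : A} {n m : ℕ} (hm : m ≤ M) :
    DepOnF (Gfun P r γ α M coef x a n m) (Iset M x a n m) := by
  intro c c' h
  have hV : ∀ j, j ≤ n → Vc r γ α M j c = Vc r γ α M j c' := by
    intro j hj
    funext zz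
    refine Vc_congr j c c' (fun p hp hpM => h p (mem_Iset.2
      ⟨⟨(hp.trans_le hj).le, hpM⟩, Or.inl (hp.trans_le hj)⟩)) zz
  have hc1 : ∀ j m', j < n → m' < M → c (j, m', x, a) = c' (j, m', x, a) :=
    fun j m' hj hm' => h _ (mem_Iset.2 ⟨⟨hj.le, hm'⟩, Or.inl hj⟩)
  have hc2 : ∀ m', m' < m → c (n, m', x, a) = c' (n, m', x, a) :=
    fun m' hm' => h _ (mem_Iset.2 ⟨⟨le_refl n, hm'.trans_le hm⟩, Or.inr ⟨hm', rfl, rfl⟩⟩)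
  unfold Gfun
  congr 1
  have e1 : ∀ j ∈ Finset.range n, coef j *
      ∑ m' ∈ Finset.range M, (Vc r γ α M j c (c (j, m', x, a)) - mdpP P (Vc r γ α M j c) x a)
      = coef j *
      ∑ m' ∈ Finset.range M, (Vc r γ α M j c' (c' (j, m', x, a)) - mdpP P (Vc r γ α M j c') x a) := by
    intro j hj
    have hj' := Finset.mem_range.1 hj
    rw [← hV j hj'.le]
    congr 1
    refine Finset.sum_congr rfl fun m' hm' => ?_
    rw [hc1 j m' hj' (Finset.mem_range.1 hm')]
  have e2 : ∀ m' ∈ Finset.range m,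
      (Vc r γ α M n c (c (n, m', x, a)) - mdpP P (Vc r γ α M n c) x a)
      = (Vc r γ α M n c' (c' (n, m', x, a)) - mdpP P (Vc r γ α M n c') x a) := by
    intro m' hm'
    rw [← hV n (le_refl n), hc2 m' (Finset.mem_range.1 hm')]
  rw [Finset.sum_congr rfl e1, Finset.sum_congr rfl e2]

lemma Gfun_stage {x : S} {a : A} {n : ℕ} (c : (ℕ × ℕ × S × A) → S) :
    Gfun P r γ α M coef x a n M c = Gfun P r γ α M coef x a (n+1) 0 c := by
  unfold Gfun
  rw [Finset.sum_range_succ]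
  simp

lemma Gfun_update {x : S} {a : A} {n m : ℕ} (c : (ℕ × ℕ × S × A) → S) (z : S) :
    Gfun P r γ α M coef x a n (m+1) (Function.update c (n, m, x, a) z)
      = Gfun P r γ α M coef x a n m c
        * Real.exp (coef n * (Vc r γ α M n c z - mdpP P (Vc r γ α M n c) x a)) := by
  set i₀ : ℕ × ℕ × S × A := (n, m, x, a) with hi₀
  set c' := Function.update c i₀ z with hc'
  have hne : ∀ p : ℕ × ℕ × S × A, p ≠ i₀ → c' p = c p := fun p hp =>
    Function.update_of_ne hp _ _
  have hV : ∀ j, j ≤ n → Vc r γ α M j c' = Vc r γ α M j c := by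
    intro j hj
    funext zz
    refine Vc_congr j c' c (fun p hp hpM => hne p fun hpe => ?_) zz
    rw [hpe] at hp
    exact Nat.lt_irrefl n (hp.trans_le hj)
  unfold Gfun
  rw [← Real.exp_add]
  congr 1
  rw [Finset.sum_range_succ]
  have e1 : ∀ j ∈ Finset.range n, coef j *
      ∑ m' ∈ Finset.range M, (Vc r γ α M j c' (c' (j, m', x, a)) - mdpP P (Vc r γ α M j c') x a)
      = coef j *
      ∑ m' ∈ Finset.range M, (Vc r γ α M j c (c (j, m', x, a)) - mdpP P (Vc r γ α M j c) x a) := by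
    intro j hj
    have hj' := Finset.mem_range.1 hj
    rw [hV j hj'.le]
    congr 1
    refine Finset.sum_congr rfl fun m' _ => ?_
    rw [hne (j, m', x, a) (by simp only [hi₀, ne_eq, Prod.mk.injEq]; rintro ⟨h1, -, -⟩; omega)]
  have e2 : ∀ m' ∈ Finset.range m,
      (Vc r γ α M n c' (c' (n, m', x, a)) - mdpP P (Vc r γ α M n c') x a)
      = (Vc r γ α M n c (c (n, m', x, a)) - mdpP P (Vc r γ α M n c) x a) := by
    intro m' hm'
    have hm2 := Finset.mem_range.1 hm'
    rw [hV n (le_refl n),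
      hne (n, m', x, a) (by simp only [hi₀, ne_eq, Prod.mk.injEq]; rintro ⟨-, h2, -⟩; omega)]
  have e3 : c' i₀ = z := Function.update_self _ _ _
  rw [Finset.sum_congr rfl e1, Finset.sum_congr rfl e2, hV n (le_refl n), e3]
  ring

end Chain


section ChainInt

variable {S A : Type} [Fintype S] [Fintype A] [Nonempty S] [Nonempty A]
  [DecidableEq S] [DecidableEq A] [MeasurableSpace S] [MeasurableSingletonClass S]
variable {Ω : Type} [MeasurableSpace Ω] {μ : Measure Ω} [IsProbabilityMeasure μ]
variable {y : (ℕ × ℕ × S × A) → Ω → S}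
variable {P : S → A → S → ℝ} {r : S → A → ℝ} {γ α : ℝ} {M : ℕ} {coef : ℕ → ℝ}

lemma Gstep
    (hy : ∀ p, Measurable (y p))
    (hyind : iIndepFun y μ)
    (hydist : ∀ (p : ℕ × ℕ × S × A) (z : S),
      μ {ω | y p ω = z} = ENNReal.ofReal (P p.2.2.1 p.2.2.2 z))
    (hP : IsKernel P) (hr : ∀ x a, |r x a| ≤ 1) (hγ0 : 0 ≤ γ) (hα0 : 0 ≤ α) (hM : 1 ≤ M)
    {H : ℝ} (hH : 1 + γ * H = H) (hH0 : 0 < H)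
    (x : S) (a : A) (n m : ℕ) (hm : m < M) :
    ∫ ω, Gfun P r γ α M coef x a n (m+1) (fun p => y p ω) ∂μ
      ≤ Real.exp (2 * coef n ^ 2 * H ^ 2) *
        ∫ ω, Gfun P r γ α M coef x a n m (fun p => y p ω) ∂μ := by
  have hVb : ∀ (c : (ℕ × ℕ × S × A) → S) (z : S), |Vc r γ α M n c z| ≤ H :=
    fun c z => Vc_abs_le hr hγ0 hα0 hM hH hH0.le n c z
  -- measurability and bounds
  have hGdep : DepOnF (Gfun P r γ α M coef x a n m) (Iset M x a n m) :=
    Gfun_dependsOn hm.le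
  have hGmeas : Measurable fun ω => Gfun P r γ α M coef x a n m (fun p => y p ω) :=
    measurable_of_dependsOn hy _ _ hGdep
  obtain ⟨CG, hCG⟩ := bound_of_dependsOn _ _ hGdep
  have hVmeas : ∀ z : S, Measurable fun ω => Vc r γ α M n (fun p => y p ω) z :=
    fun z => measurable_of_dependsOn hy _ _ (Vc_dependsOn n z M x a)
  have hmdpmeas : Measurable fun ω => mdpP P (Vc r γ α M n (fun p => y p ω)) x a := by
    unfold mdpP
    exact Finset.measurable_sum _ fun z _ => (measurable_const.mul (hVmeas z))
  have hEmeas : ∀ z : S, Measurable fun ω =>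
      Real.exp (coef n * (Vc r γ α M n (fun p => y p ω) z
        - mdpP P (Vc r γ α M n (fun p => y p ω)) x a)) := fun z =>
    (Real.measurable_exp.comp (measurable_const.mul ((hVmeas z).sub hmdpmeas)))
  have hEbound : ∀ (c : (ℕ × ℕ × S × A) → S) (z : S),
      Real.exp (coef n * (Vc r γ α M n c z - mdpP P (Vc r γ α M n c) x a))
        ≤ Real.exp (|coef n| * (2 * H)) := by
    intro c z
    refine Real.exp_le_exp.2 ?_
    have h1 : |Vc r γ α M n c z - mdpP P (Vc r γ α M n c) x a| ≤ 2 * H := by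
      have h2 := hVb c z
      have h3 := mdpP_abs_le hP (fun zz => hVb c zz) x a
      cases' abs_le.1 h2 with a1 a2; cases' abs_le.1 h3 with a3 a4
      rw [abs_le]; constructor <;> linarith
    calc coef n * (Vc r γ α M n c z - mdpP P (Vc r γ α M n c) x a)
        ≤ |coef n * (Vc r γ α M n c z - mdpP P (Vc r γ α M n c) x a)| := le_abs_self _
      _ = |coef n| * |Vc r γ α M n c z - mdpP P (Vc r γ α M n c) x a| := abs_mul _ _
      _ ≤ |coef n| * (2 * H) := mul_le_mul_of_nonneg_left h1 (abs_nonneg _)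
  set E : S → Ω → ℝ := fun z ω =>
    Real.exp (coef n * (Vc r γ α M n (fun p => y p ω) z
      - mdpP P (Vc r γ α M n (fun p => y p ω)) x a)) with hEdef
  have hint : ∀ z : S, Integrable (fun ω =>
      Gfun P r γ α M coef x a n m (fun p => y p ω) * E z ω) μ := by
    intro z
    refine integrable_of_bdd (hGmeas.mul (hEmeas z)) (|CG| * Real.exp (|coef n| * (2 * H)))
      fun ω => ?_
    rw [abs_mul]
    refine mul_le_mul ((hCG _).trans (le_abs_self _)) ?_ (abs_nonneg _) (abs_nonneg _)
    rw [abs_of_pos (Real.exp_pos _)]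
    exact hEbound _ z
  have hintG : Integrable (fun ω => Gfun P r γ α M coef x a n m (fun p => y p ω)) μ :=
    integrable_of_bdd hGmeas (|CG|) fun ω => (hCG _).trans (le_abs_self _)
  -- peel the coordinate (n, m, x, a)
  rw [integral_peel hy hyind (Iset M x a n (m+1)) _ (Gfun_dependsOn hm) (n, m, x, a)]
  have hupd : ∀ (z : S) (ω : Ω),
      Gfun P r γ α M coef x a n (m+1) (Function.update (fun p => y p ω) (n, m, x, a) z)
        = Gfun P r γ α M coef x a n m (fun p => y p ω) * E z ω :=
    fun z ω => Gfun_update _ z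
  calc ∑ z : S, (μ {ω | y (n, m, x, a) ω = z}).toReal *
        ∫ ω, Gfun P r γ α M coef x a n (m+1)
          (Function.update (fun p => y p ω) (n, m, x, a) z) ∂μ
      = ∑ z : S, ∫ ω, P x a z * (Gfun P r γ α M coef x a n m (fun p => y p ω) * E z ω) ∂μ := by
        refine Finset.sum_congr rfl fun z _ => ?_
        rw [hydist (n, m, x, a) z, ENNReal.toReal_ofReal (hP.1 x a z)]
        rw [integral_congr_ae (ae_of_all _ fun ω => hupd z ω), ← integral_const_mul]
    _ = ∫ ω, ∑ z : S, P x a z *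
          (Gfun P r γ α M coef x a n m (fun p => y p ω) * E z ω) ∂μ :=
        (integral_finset_sum _ fun z _ => (hint z).const_mul _).symm
    _ ≤ ∫ ω, Gfun P r γ α M coef x a n m (fun p => y p ω)
          * Real.exp (2 * coef n ^ 2 * H ^ 2) ∂μ := by
        refine integral_mono (integrable_finset_sum _ fun z _ => (hint z).const_mul _)
          (hintG.mul_const _) fun ω => ?_
        have hpt : ∑ z : S, P x a z *
            (Gfun P r γ α M coef x a n m (fun p => y p ω) * E z ω)
            = Gfun P r γ α M coef x a n m (fun p => y p ω) * ∑ z : S, P x a z * E z ω := by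
          rw [Finset.mul_sum]; exact Finset.sum_congr rfl fun z _ => by ring
        rw [hpt]
        refine mul_le_mul_of_nonneg_left ?_ Gfun_nonneg
        exact sample_mgf_le hP hH0 x a _ (hVb _) (coef n)
    _ = Real.exp (2 * coef n ^ 2 * H ^ 2) *
          ∫ ω, Gfun P r γ α M coef x a n m (fun p => y p ω) ∂μ := by
        rw [integral_mul_const]; ring

lemma Gchain
    (hy : ∀ p, Measurable (y p))
    (hyind : iIndepFun y μ)
    (hydist : ∀ (p : ℕ × ℕ × S × A) (z : S),
      μ {ω | y p ω = z} = ENNReal.ofReal (P p.2.2.1 p.2.2.2 z))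
    (hP : IsKernel P) (hr : ∀ x a, |r x a| ≤ 1) (hγ0 : 0 ≤ γ) (hα0 : 0 ≤ α) (hM : 1 ≤ M)
    {H : ℝ} (hH : 1 + γ * H = H) (hH0 : 0 < H) (x : S) (a : A) (k : ℕ) :
    ∫ ω, Gfun P r γ α M coef x a k 0 (fun p => y p ω) ∂μ
      ≤ Real.exp (2 * H ^ 2 * ((M : ℝ) * ∑ j ∈ Finset.range k, coef j ^ 2)) := by
  induction k with
  | zero =>
    have h0 : ∀ ω : Ω, Gfun P r γ α M coef x a 0 0 (fun p => y p ω) = 1 := by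
      intro ω; unfold Gfun; simp
    rw [integral_congr_ae (ae_of_all _ h0)]
    simp
  | succ k ih =>
    have hstep : ∀ m : ℕ, m ≤ M →
        ∫ ω, Gfun P r γ α M coef x a k m (fun p => y p ω) ∂μ
          ≤ Real.exp (2 * H ^ 2 * ((M : ℝ) * ∑ j ∈ Finset.range k, coef j ^ 2
              + (m : ℝ) * coef k ^ 2)) := by
      intro m
      induction m with
      | zero => intro _; simpa using ih
      | succ m ihm =>
        intro hm1
        have hmM : m < M := hm1
        calc ∫ ω, Gfun P r γ α M coef x a k (m+1) (fun p => y p ω) ∂μ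
            ≤ Real.exp (2 * coef k ^ 2 * H ^ 2) *
              ∫ ω, Gfun P r γ α M coef x a k m (fun p => y p ω) ∂μ :=
              Gstep hy hyind hydist hP hr hγ0 hα0 hM hH hH0 x a k m hmM
          _ ≤ Real.exp (2 * coef k ^ 2 * H ^ 2) *
              Real.exp (2 * H ^ 2 * ((M : ℝ) * ∑ j ∈ Finset.range k, coef j ^ 2
                + (m : ℝ) * coef k ^ 2)) :=
              mul_le_mul_of_nonneg_left (ihm hmM.le) (Real.exp_pos _).le
          _ = Real.exp (2 * H ^ 2 * ((M : ℝ) * ∑ j ∈ Finset.range k, coef j ^ 2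
                + ((m : ℝ) + 1) * coef k ^ 2)) := by
              rw [← Real.exp_add]; congr 1; ring
          _ = Real.exp (2 * H ^ 2 * ((M : ℝ) * ∑ j ∈ Finset.range k, coef j ^ 2
                + ((m + 1 : ℕ) : ℝ) * coef k ^ 2)) := by push_cast; ring_nf
    have hfin := hstep M (le_refl M)
    have heq : ∀ ω : Ω, Gfun P r γ α M coef x a k M (fun p => y p ω)
        = Gfun P r γ α M coef x a (k+1) 0 (fun p => y p ω) := fun ω => Gfun_stage _
    rw [integral_congr_ae (ae_of_all _ heq)] at hfin
    refine hfin.trans (le_of_eq ?_)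
    congr 1
    rw [Finset.sum_range_succ]
    ring

end ChainInt


section Rep

variable {S A : Type} [Fintype S] [Fintype A] [Nonempty S] [Nonempty A] {Ω : Type}

lemma rep_sq
    (P : S → A → S → ℝ) (r : S → A → ℝ) (γ α : ℝ) (M : ℕ)
    (y : ℕ → ℕ → S → A → Ω → S)
    (w v : ℕ → Ω → S → ℝ) (sq qv : ℕ → Ω → S → A → ℝ)
    (hs0 : ∀ ω x a, sq 0 ω x a = 0)
    (hw0 : ∀ ω x, w 0 ω x = 0)
    (hv : ∀ ω k x, v k ω x = w k ω x - α * w (k - 1) ω x)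
    (hqv : ∀ ω k x a, qv (k + 1) ω x a
      = r x a + (γ / (M : ℝ)) * ∑ m ∈ Finset.range M, v k ω (y k m x a ω))
    (hsq : ∀ ω k x a, sq (k + 1) ω x a = qv (k + 1) ω x a + α * sq k ω x a)
    (hwk : ∀ ω k x, w (k + 1) ω x = ⨆ a, sq (k + 1) ω x a) :
    ∀ (k : ℕ) (ω : Ω) (x : S) (aa : A),
      sq k ω x aa = SQc r γ α M k (fun p : ℕ × ℕ × S × A => y p.1 p.2.1 p.2.2.1 p.2.2.2 ω) x aa := by
  have hw' : ∀ (k : ℕ) (ω : Ω) (x : S), w k ω x = ⨆ a, sq k ω x a := by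
    intro k ω x
    cases k with
    | zero =>
      rw [hw0]
      have : ∀ a : A, sq 0 ω x a = 0 := fun a => hs0 ω x a
      simp only [this, ciSup_const]
    | succ k => exact hwk ω k x
  intro k
  induction k using Nat.strong_induction_on with
  | _ k ih =>
    match k with
    | 0 => intro ω x aa; rw [hs0]; rfl
    | k + 1 =>
      intro ω x aa
      set c := fun p : ℕ × ℕ × S × A => y p.1 p.2.1 p.2.2.1 p.2.2.2 ω with hc
      have hvk : ∀ z : S, v k ω z = Vc r γ α M k c z := by
        intro z
        have p1 : ∀ b, sq k ω z b = SQc r γ α M k c z b :=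
          fun b => ih k (Nat.lt_succ_self k) ω z b
        have p2 : ∀ b, sq (k - 1) ω z b = SQc r γ α M (k - 1) c z b :=
          fun b => ih (k - 1) (Nat.lt_succ_of_le (Nat.sub_le k 1)) ω z b
        rw [hv, hw', hw']
        unfold Vc
        simp only [p1, p2]
      have hsum : ∑ m ∈ Finset.range M, v k ω (y k m x aa ω)
          = ∑ m ∈ Finset.range M, Vc r γ α M k c (c (k, m, x, aa)) :=
        Finset.sum_congr rfl fun m _ => hvk (y k m x aa ω)
      rw [hsq, hqv, SQc_succ, ih k (Nat.lt_succ_self k) ω x aa, hsum]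

end Rep

section Chernoff

open Real

variable {Ω : Type} [MeasurableSpace Ω] {μ : Measure Ω} [IsProbabilityMeasure μ]

lemma chernoff_one_sided (Z : Ω → ℝ) {s t : ℝ} (hs : 0 < s) (ht : 0 < t)
    (hint : ∀ l : ℝ, Integrable (fun ω => Real.exp (l * Z ω)) μ)
    (hbound : ∀ l : ℝ, ∫ ω, Real.exp (l * Z ω) ∂μ ≤ Real.exp (s * l ^ 2)) :
    μ {ω | t ≤ Z ω} ≤ ENNReal.ofReal (Real.exp (-(t ^ 2) / (4 * s))) := by
  set l := t / (2 * s) with hl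
  have hl0 : 0 ≤ l := by positivity
  have h1 := measure_ge_le_exp_mul_mgf (X := Z) (μ := μ) t hl0 (hint l)
  have h2 : mgf Z μ l ≤ Real.exp (s * l ^ 2) := by
    rw [mgf]; exact hbound l
  have h3 : Real.exp (-l * t) * Real.exp (s * l ^ 2) = Real.exp (-(t ^ 2) / (4 * s)) := by
    rw [← Real.exp_add]; congr 1; rw [hl]; field_simp; ring
  have h4 : (μ {ω | t ≤ Z ω}).toReal ≤ Real.exp (-(t ^ 2) / (4 * s)) := by
    calc (μ {ω | t ≤ Z ω}).toReal ≤ Real.exp (-l * t) * mgf Z μ l := h1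
      _ ≤ Real.exp (-l * t) * Real.exp (s * l ^ 2) :=
          mul_le_mul_of_nonneg_left h2 (Real.exp_pos _).le
      _ = Real.exp (-(t ^ 2) / (4 * s)) := h3
  calc μ {ω | t ≤ Z ω} = ENNReal.ofReal (μ {ω | t ≤ Z ω}).toReal :=
        (ENNReal.ofReal_toReal (measure_ne_top μ _)).symm
    _ ≤ ENNReal.ofReal (Real.exp (-(t ^ 2) / (4 * s))) := ENNReal.ofReal_le_ofReal h4

lemma chernoff_two_sided (X : Ω → ℝ) {s t : ℝ} (hs : 0 < s) (ht : 0 < t)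
    (hint : ∀ l : ℝ, Integrable (fun ω => Real.exp (l * X ω)) μ)
    (hbound : ∀ l : ℝ, ∫ ω, Real.exp (l * X ω) ∂μ ≤ Real.exp (s * l ^ 2)) :
    μ {ω | t ≤ |X ω|} ≤ ENNReal.ofReal (2 * Real.exp (-(t ^ 2) / (4 * s))) := by
  have hXneg : ∀ l : ℝ, (fun ω => Real.exp (l * (-X ω))) = fun ω => Real.exp ((-l) * X ω) := by
    intro l; funext ω; congr 1; ring
  have h1 : μ {ω | t ≤ X ω} ≤ ENNReal.ofReal (Real.exp (-(t ^ 2) / (4 * s))) :=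
    chernoff_one_sided X hs ht hint hbound
  have h2 : μ {ω | t ≤ -X ω} ≤ ENNReal.ofReal (Real.exp (-(t ^ 2) / (4 * s))) := by
    refine chernoff_one_sided (fun ω => -X ω) hs ht (fun l => ?_) (fun l => ?_)
    · rw [hXneg l]; exact hint (-l)
    · rw [hXneg l]
      refine (hbound (-l)).trans (le_of_eq ?_)
      congr 1; ring
  have hsub : {ω | t ≤ |X ω|} ⊆ {ω | t ≤ X ω} ∪ {ω | t ≤ -X ω} := by
    intro ω hω
    rcases abs_cases (X ω) with ⟨he, _⟩ | ⟨he, _⟩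
    · left; rwa [Set.mem_setOf_eq, ← he]
    · right; rwa [Set.mem_setOf_eq, ← he]
  calc μ {ω | t ≤ |X ω|} ≤ μ ({ω | t ≤ X ω} ∪ {ω | t ≤ -X ω}) := measure_mono hsub
    _ ≤ μ {ω | t ≤ X ω} + μ {ω | t ≤ -X ω} := measure_union_le _ _
    _ ≤ ENNReal.ofReal (Real.exp (-(t ^ 2) / (4 * s)))
        + ENNReal.ofReal (Real.exp (-(t ^ 2) / (4 * s))) := add_le_add h1 h2
    _ = ENNReal.ofReal (2 * Real.exp (-(t ^ 2) / (4 * s))) := by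
        rw [← ENNReal.ofReal_add (Real.exp_pos _).le (Real.exp_pos _).le]; ring_nf

end Chernoff


set_option maxHeartbeats 1000000

/-- Lemma 4.2: Hoeffding bound on the averaged errors `E_k`. -/
theorem mdvi_hoeffding_bound_Ek
    (S A : Type) [Fintype S] [Fintype A] [Nonempty S] [Nonempty A]
    [MeasurableSpace S] [MeasurableSingletonClass S]
    (P : S → A → S → ℝ) (hP : IsKernel P)
    (r : S → A → ℝ) (hr : ∀ x a, |r x a| ≤ 1)
    (γ H : ℝ) (hγ0 : 0 ≤ γ) (hγ1 : γ < 1) (hH : H = 1 / (1 - γ))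
    (Ω : Type) [MeasurableSpace Ω] (μ : Measure Ω) [IsProbabilityMeasure μ]
    (y : ℕ → ℕ → S → A → Ω → S)
    (hymeas : ∀ k m x a, Measurable (y k m x a))
    (hydist : ∀ k m x a z, μ {ω | y k m x a ω = z} = ENNReal.ofReal (P x a z))
    (hyind : iIndepFun (β := fun _ : ℕ × ℕ × S × A => S)
      (fun p => y p.1 p.2.1 p.2.2.1 p.2.2.2) μ)
    (α : ℝ) (hα0 : 0 ≤ α) (hα1 : α < 1) (K M : ℕ) (hM : 1 ≤ M)
    (w v : ℕ → Ω → S → ℝ) (sq qv : ℕ → Ω → S → A → ℝ)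
    (hs0 : ∀ ω x a, sq 0 ω x a = 0)
    (hw0 : ∀ ω x, w 0 ω x = 0)
    (hv : ∀ ω k x, v k ω x = w k ω x - α * w (k - 1) ω x)
    (hqv : ∀ ω k x a, qv (k + 1) ω x a
      = r x a + (γ / (M : ℝ)) * ∑ m ∈ Finset.range M, v k ω (y k m x a ω))
    (hsq : ∀ ω k x a, sq (k + 1) ω x a = qv (k + 1) ω x a + α * sq k ω x a)
    (hwk : ∀ ω k x, w (k + 1) ω x = ⨆ a, sq (k + 1) ω x a)
    (εf Ef : ℕ → Ω → S → A → ℝ)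
    (hεf : ∀ ω k x a, εf (k + 1) ω x a
      = (γ / (M : ℝ)) * ∑ m ∈ Finset.range M, v k ω (y k m x a ω) - γ * mdpP P (v k ω) x a)
    (hEf : ∀ ω k x a, Ef k ω x a = ∑ j ∈ Finset.range k, α ^ (k - 1 - j) * εf (j + 1) ω x a)
    (δ : ℝ) (hδ0 : 0 < δ) (hδ1 : δ < 1) :
    μ ({ω | ∀ k ∈ Finset.Icc 1 K, ∀ x a, |Ef k ω x a|
        < 3 * H * Real.sqrt ((1 / (1 - α)) *
          Real.log ((8 * K * Fintype.card S * Fintype.card A : ℝ) / δ) / (M : ℝ))}ᶜ)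
      ≤ ENNReal.ofReal (δ / 4) := by
  classical
  -- trivial case K = 0
  rcases Nat.eq_zero_or_pos K with hK0 | hK1
  · have hempty : ∀ Tb : ℝ, {ω : Ω | ∀ k ∈ Finset.Icc 1 K, ∀ (x : S) (a : A),
        |Ef k ω x a| < Tb}ᶜ = ∅ := by
      intro Tb
      rw [Finset.Icc_eq_empty (by omega)]
      ext ω; simp
    rw [hempty _, measure_empty]
    exact zero_le
  -- abbreviations
  set Y : (ℕ × ℕ × S × A) → Ω → S := fun p => y p.1 p.2.1 p.2.2.1 p.2.2.2 with hYdef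
  have hYmeas : ∀ p, Measurable (Y p) := fun p => hymeas _ _ _ _
  have hYdist : ∀ (p : ℕ × ℕ × S × A) (z : S),
      μ {ω | Y p ω = z} = ENNReal.ofReal (P p.2.2.1 p.2.2.2 z) :=
    fun p z => hydist p.1 p.2.1 p.2.2.1 p.2.2.2 z
  have hYind : iIndepFun Y μ :=
    hyind
  have h1γ : 0 < 1 - γ := by linarith
  have h1α : 0 < 1 - α := by linarith
  have hHpos : 0 < H := by rw [hH]; positivity
  have hHrec : 1 + γ * H = H := by rw [hH]; field_simp; ring
  have hM0 : (0:ℝ) < (M:ℝ) := by exact_mod_cast hM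
  have hvrep : ∀ (k : ℕ) (ω : Ω) (z : S), v k ω z = Vc r γ α M k (fun p => Y p ω) z := by
    have hsq' := rep_sq P r γ α M y w v sq qv hs0 hw0 hv hqv hsq hwk
    have hw' : ∀ (k : ℕ) (ω : Ω) (x : S), w k ω x = ⨆ a, sq k ω x a := by
      intro k ω x
      cases k with
      | zero =>
        rw [hw0]
        have : ∀ a : A, sq 0 ω x a = 0 := fun a => hs0 ω x a
        simp only [this, ciSup_const]
      | succ k => exact hwk ω k x
    intro k ω z
    have p1 : ∀ b, sq k ω z b = SQc r γ α M k (fun p => Y p ω) z b :=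
      fun b => hsq' k ω z b
    have p2 : ∀ b, sq (k - 1) ω z b = SQc r γ α M (k - 1) (fun p => Y p ω) z b :=
      fun b => hsq' (k - 1) ω z b
    rw [hv, hw', hw']
    unfold Vc
    simp only [p1, p2]
  -- real constants
  set T : ℝ := 3 * H * Real.sqrt ((1 / (1 - α)) *
    Real.log ((8 * K * Fintype.card S * Fintype.card A : ℝ) / δ) / (M : ℝ)) with hT
  set u : ℝ := (8 * K * Fintype.card S * Fintype.card A : ℝ) / δ with hu
  set ι : ℝ := Real.log u with hι
  set q : ℝ := (1 / (1 - α)) * ι / (M : ℝ) with hq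
  set Kr : ℝ := (K : ℝ) with hKr
  set Xc : ℝ := (Fintype.card S : ℝ) with hXc
  set Ac : ℝ := (Fintype.card A : ℝ) with hAc
  have hKr1 : 1 ≤ Kr := by
    rw [hKr]; exact_mod_cast Nat.one_le_iff_ne_zero.2 (Nat.pos_iff_ne_zero.1 hK1)
  have hXc1 : 1 ≤ Xc := by
    rw [hXc]; exact_mod_cast Nat.one_le_iff_ne_zero.2 Fintype.card_ne_zero
  have hAc1 : 1 ≤ Ac := by
    rw [hAc]; exact_mod_cast Nat.one_le_iff_ne_zero.2 Fintype.card_ne_zero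
  have huKXA : u = 8 * Kr * Xc * Ac / δ := hu
  have hKX : 1 * 1 ≤ Kr * Xc := mul_le_mul hKr1 hXc1 zero_le_one (by linarith)
  have hprod1 : 1 ≤ Kr * Xc * Ac := by nlinarith
  have hu1 : 1 < u := by
    rw [huKXA, lt_div_iff₀ hδ0, show (8:ℝ) * Kr * Xc * Ac = 8 * (Kr * Xc * Ac) from by ring]
    linarith
  have hu0 : 0 < u := lt_trans one_pos hu1
  have hι0 : 0 < ι := Real.log_pos hu1
  have hq0 : 0 < q := by
    rw [hq]
    exact div_pos (mul_pos (by positivity) hι0) hM0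
  have hT3 : T = 3 * H * Real.sqrt q := hT
  have hT0 : 0 < T := by
    rw [hT3]
    exact mul_pos (by positivity) (Real.sqrt_pos.2 hq0)
  have hT2 : T ^ 2 = 9 * H ^ 2 * q := by
    rw [hT3, mul_pow, mul_pow, Real.sq_sqrt hq0.le]; norm_num
  -- per-triple bad-set bound
  set c0 : ℝ := δ / (4 * (Kr * Xc * Ac)) with hc0
  have hbad : ∀ (k : ℕ) (x : S) (a : A),
      μ {ω | T ≤ |Ef k ω x a|} ≤ ENNReal.ofReal c0 := by
    intro k x a
    rcases eq_or_lt_of_le hγ0 with hγz | hγpos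
    · -- γ = 0 : Ef vanishes
      have hEf0 : ∀ ω, Ef k ω x a = 0 := by
        intro ω
        rw [hEf]
        refine Finset.sum_eq_zero fun j _ => ?_
        rw [hεf, ← hγz]
        simp
      have : {ω | T ≤ |Ef k ω x a|} = ∅ := by
        ext ω
        simp only [Set.mem_setOf_eq, hEf0 ω, abs_zero, Set.mem_empty_iff_false, iff_false,
          not_le]
        exact hT0
      rw [this, measure_empty]
      exact zero_le
    · -- γ > 0
      set s : ℝ := 2 * H ^ 2 * γ ^ 2 / ((1 - α) * (M : ℝ)) with hs
      have hs0' : 0 < s := by rw [hs]; positivity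
      -- mgf bound for every l
      have hmain : ∀ l : ℝ,
          Integrable (fun ω => Real.exp (l * Ef k ω x a)) μ ∧
          ∫ ω, Real.exp (l * Ef k ω x a) ∂μ ≤ Real.exp (s * l ^ 2) := by
        intro l
        have hEfG : ∀ ω, Real.exp (l * Ef k ω x a)
            = Gfun P r γ α M (fun j => l * α ^ (k - 1 - j) * γ / (M : ℝ)) x a k 0
                (fun p => Y p ω) := by
          intro ω
          unfold Gfun
          congr 1
          simp only [Finset.range_zero, Finset.sum_empty, mul_zero, add_zero]
          rw [hEf ω k x a, Finset.mul_sum]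
          refine Finset.sum_congr rfl fun j _ => ?_
          rw [hεf ω j x a]
          have hvf : v j ω = Vc r γ α M j (fun p => Y p ω) := funext (hvrep j ω)
          rw [hvf]
          have hyc : ∀ m' : ℕ, (fun p : ℕ × ℕ × S × A => Y p ω) (j, m', x, a)
              = y j m' x a ω := fun m' => rfl
          rw [Finset.sum_sub_distrib, Finset.sum_const, Finset.card_range, nsmul_eq_mul]
          simp only [hyc]
          field_simp
        have hGdep : DepOnF
            (Gfun P r γ α M (fun j => l * α ^ (k - 1 - j) * γ / (M : ℝ)) x a k 0)
            (Iset M x a k 0) := Gfun_dependsOn (Nat.zero_le M)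
        have hGmeas := measurable_of_dependsOn hYmeas _ _ hGdep
        obtain ⟨C, hC⟩ := bound_of_dependsOn _ _ hGdep
        have hint : Integrable (fun ω => Real.exp (l * Ef k ω x a)) μ := by
          rw [show (fun ω => Real.exp (l * Ef k ω x a))
              = fun ω => Gfun P r γ α M (fun j => l * α ^ (k - 1 - j) * γ / (M : ℝ)) x a k 0
                  (fun p => Y p ω) from funext hEfG]
          exact integrable_of_bdd hGmeas (|C|) fun ω => (hC _).trans (le_abs_self _)
        refine ⟨hint, ?_⟩
        rw [integral_congr_ae (ae_of_all _ hEfG)]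
        refine (Gchain hYmeas hYind hYdist hP hr hγ0 hα0 hM hHrec hHpos x a k).trans
          (Real.exp_le_exp.2 ?_)
        -- sum of squared coefficients
        have hsum : ∑ j ∈ Finset.range k, (l * α ^ (k - 1 - j) * γ / (M : ℝ)) ^ 2
            = (l * γ / (M : ℝ)) ^ 2 * ∑ j ∈ Finset.range k, (α ^ 2) ^ j := by
          rw [Finset.mul_sum]
          rw [show ∑ j ∈ Finset.range k, (l * α ^ (k - 1 - j) * γ / (M : ℝ)) ^ 2
              = ∑ j ∈ Finset.range k, (l * α ^ j * γ / (M : ℝ)) ^ 2 from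
            Finset.sum_range_reflect (fun j => (l * α ^ j * γ / (M : ℝ)) ^ 2) k]
          refine Finset.sum_congr rfl fun j _ => ?_
          rw [← pow_mul, mul_comm 2 j, pow_mul]
          field_simp
        have hα2 : α ^ 2 < 1 := pow_lt_one₀ hα0 hα1 two_ne_zero
        have h1α2 : 0 < 1 - α ^ 2 := sub_pos.2 hα2
        have hαα : α ^ 2 ≤ α := by
          have h := mul_le_mul_of_nonneg_right hα1.le hα0
          rw [pow_two]; linarith
        have hgeom : ∑ j ∈ Finset.range k, (α ^ 2) ^ j ≤ 1 / (1 - α) := by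
          have h1 : ∑ j ∈ Finset.range k, (α ^ 2) ^ j ≤ 1 / (1 - α ^ 2) := by
            rw [geom_sum_eq (ne_of_lt hα2) k,
              show (α ^ 2) ^ k - 1 = -(1 - (α ^ 2) ^ k) from by ring,
              show α ^ 2 - 1 = -(1 - α ^ 2) from by ring, neg_div_neg_eq]
            have hp : 0 ≤ (α ^ 2) ^ k := by positivity
            gcongr
            linarith
          refine h1.trans (one_div_le_one_div_of_le h1α (by linarith))
        calc 2 * H ^ 2 * ((M : ℝ) * ∑ j ∈ Finset.range k,
              (l * α ^ (k - 1 - j) * γ / (M : ℝ)) ^ 2)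
            = 2 * H ^ 2 * (M : ℝ) * (l * γ / (M : ℝ)) ^ 2
              * ∑ j ∈ Finset.range k, (α ^ 2) ^ j := by rw [hsum]; ring
          _ ≤ 2 * H ^ 2 * (M : ℝ) * (l * γ / (M : ℝ)) ^ 2 * (1 / (1 - α)) := by
              refine mul_le_mul_of_nonneg_left hgeom (by positivity)
          _ = s * l ^ 2 := by rw [hs]; field_simp
      -- Chernoff
      have hcher := chernoff_two_sided (μ := μ) (fun ω => Ef k ω x a) hs0' hT0
        (fun l => (hmain l).1) (fun l => (hmain l).2)
      refine hcher.trans (ENNReal.ofReal_le_ofReal ?_)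
      -- arithmetic: 2 exp(-T²/(4s)) ≤ c0
      have hγ2le : γ ^ 2 ≤ 1 := by
        have h := mul_le_mul_of_nonneg_right hγ1.le hγ0
        rw [pow_two]; nlinarith [h]
      have hratio : T ^ 2 / (4 * s) = 9 * ι / (8 * γ ^ 2) := by
        rw [hT2, hs, hq]
        field_simp
        ring
      have hexp : -(T ^ 2) / (4 * s) ≤ -ι := by
        rw [neg_div, neg_le_neg_iff, hratio, le_div_iff₀ (by positivity)]
        nlinarith
      have hexpv : Real.exp (-ι) = δ / (8 * Kr * Xc * Ac) := by
        rw [hι, Real.exp_neg, Real.exp_log hu0, huKXA, inv_div]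
      calc 2 * Real.exp (-(T ^ 2) / (4 * s)) ≤ 2 * Real.exp (-ι) := by
            exact mul_le_mul_of_nonneg_left (Real.exp_le_exp.2 hexp) (by norm_num)
        _ = 2 * (δ / (8 * Kr * Xc * Ac)) := by rw [hexpv]
        _ = c0 := by rw [hc0]; field_simp; ring
  -- union bound
  have hsubset : {ω : Ω | ∀ k ∈ Finset.Icc 1 K, ∀ x a, |Ef k ω x a| < T}ᶜ
      ⊆ ⋃ k ∈ Finset.Icc 1 K, ⋃ x : S, ⋃ a : A, {ω | T ≤ |Ef k ω x a|} := by
    intro ω hω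
    simp only [Set.mem_compl_iff, Set.mem_setOf_eq, not_forall, not_lt] at hω
    obtain ⟨k, hk, x, a, h⟩ := hω
    simp only [Set.mem_iUnion, Set.mem_setOf_eq]
    exact ⟨k, hk, x, a, h⟩
  calc μ ({ω : Ω | ∀ k ∈ Finset.Icc 1 K, ∀ x a, |Ef k ω x a| < T}ᶜ)
      ≤ μ (⋃ k ∈ Finset.Icc 1 K, ⋃ x : S, ⋃ a : A, {ω | T ≤ |Ef k ω x a|}) :=
        measure_mono hsubset
    _ ≤ ∑ k ∈ Finset.Icc 1 K, μ (⋃ x : S, ⋃ a : A, {ω | T ≤ |Ef k ω x a|}) :=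
        measure_biUnion_finset_le _ _
    _ ≤ ∑ k ∈ Finset.Icc 1 K, ∑ x : S, μ (⋃ a : A, {ω | T ≤ |Ef k ω x a|}) := by
        refine Finset.sum_le_sum fun k _ => ?_
        exact measure_iUnion_fintype_le _ _
    _ ≤ ∑ k ∈ Finset.Icc 1 K, ∑ x : S, ∑ a : A, μ {ω | T ≤ |Ef k ω x a|} := by
        refine Finset.sum_le_sum fun k _ => Finset.sum_le_sum fun x _ => ?_
        exact measure_iUnion_fintype_le _ _
    _ ≤ ∑ k ∈ Finset.Icc 1 K, ∑ x : S, ∑ a : A, ENNReal.ofReal c0 := by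
        refine Finset.sum_le_sum fun k _ => Finset.sum_le_sum fun x _ =>
          Finset.sum_le_sum fun a _ => hbad k x a
    _ = (K * Fintype.card S * Fintype.card A : ℕ) • ENNReal.ofReal c0 := by
        simp only [Finset.sum_const, Finset.card_univ, Nat.card_Icc, smul_smul]
        congr 1
        simp [Nat.add_sub_cancel, mul_assoc]
    _ = ENNReal.ofReal (δ / 4) := by
        rw [nsmul_eq_mul, ← ENNReal.ofReal_natCast, ← ENNReal.ofReal_mul (by positivity)]
        congr 1
        rw [hc0]
        push_cast
        rw [← hKr, ← hXc, ← hAc]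
        have hKr0 : Kr ≠ 0 := by linarith
        have hXc0 : Xc ≠ 0 := by linarith
        have hAc0 : Ac ≠ 0 := by linarith
        field_simp
end
end

section
/- (Lemma 4.6, value estimation variance bound) On the event 𝓔₁ ∩ 𝓔₂, for every k ∈ {1,…,K}: σ(v_k) ≤ 2H·min{1, 2·max{α,γ}^{k−1} + A_{γ,k−1}/A_∞ + 6H√(ι₁/M)}·1 + σ(V*). Furthermore, σ(v_0) = 0. -/
open MeasureTheory ProbabilityTheory Finset Real

noncomputable section

namespace MDVIHelpers

/-- bracket lemma for sups -/
lemma sup_bracket {A : Type} [Fintype A] [Nonempty A] (f g : A → ℝ) (β c : ℝ)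
    (hβ : 0 ≤ β) (h : ∀ a, |f a - β * g a| ≤ c) :
    |(⨆ a, f a) - β * (⨆ a, g a)| ≤ c := by
  have hbf : BddAbove (Set.range f) := (Set.finite_range f).bddAbove
  have hbg : BddAbove (Set.range g) := (Set.finite_range g).bddAbove
  rw [abs_le]
  constructor
  · -- lower:  -c ≤ ⨆f - β⨆g
    obtain ⟨a₂, ha₂⟩ := Finite.exists_max g
    have hg2 : (⨆ a, g a) = g a₂ := le_antisymm (ciSup_le ha₂) (le_ciSup hbg a₂)
    have h1 : β * g a₂ - c ≤ f a₂ := by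
      have := (abs_le.mp (h a₂)).1
      linarith
    have h2 : f a₂ ≤ ⨆ a, f a := le_ciSup hbf a₂
    rw [hg2]; linarith
  · -- upper
    have h1 : (⨆ a, f a) ≤ β * (⨆ a, g a) + c := by
      apply ciSup_le
      intro a
      have := (abs_le.mp (h a)).2
      have h2 : β * g a ≤ β * (⨆ a, g a) :=
        mul_le_mul_of_nonneg_left (le_ciSup hbg a) hβ
      linarith
    linarith

lemma geom_id (x : ℝ) (n : ℕ) :
    (1 - x) * ∑ i ∈ Finset.range n, x ^ i = 1 - x ^ n := by
  induction n with
  | zero => simp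
  | succ n ih =>
    rw [Finset.sum_range_succ, pow_succ]
    nlinarith [ih]

lemma telescope_A (α γ : ℝ) (n : ℕ) :
    (α - γ) * ∑ j ∈ Finset.range n, γ ^ (n - j) * α ^ j = γ * α ^ n - γ ^ (n + 1) := by
  have h : ∀ j ∈ Finset.range n,
      (α - γ) * (γ ^ (n - j) * α ^ j)
        = γ ^ (n + 1 - (j+1)) * α ^ (j+1) - γ ^ (n + 1 - j) * α ^ j := by
    intro j hj
    have hj' : j < n := Finset.mem_range.mp hj
    have e1 : n + 1 - (j + 1) = n - j := by omega
    have e2 : n + 1 - j = (n - j) + 1 := by omega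
    rw [e1, e2, pow_succ, pow_succ]
    ring
  rw [Finset.mul_sum, Finset.sum_congr rfl h,
    Finset.sum_range_sub (fun j => γ ^ (n + 1 - j) * α ^ j)]
  have e1 : n + 1 - n = 1 := by omega
  rw [e1, Nat.sub_zero, pow_one, pow_zero, mul_one, pow_succ]

/-- variance sqrt triangle (Cauchy-Schwarz for weighted variance) -/
lemma var_key {S : Type} [Fintype S] (p h : S → ℝ) (hp1 : ∑ z, p z = 1) :
    (∑ z, p z * h z ^ 2) - (∑ z, p z * h z) ^ 2
      = ∑ z, p z * (h z - ∑ w, p w * h w) ^ 2 := by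
  have : ∀ z, p z * (h z - ∑ w, p w * h w) ^ 2
      = p z * h z ^ 2 - 2 * (∑ w, p w * h w) * (p z * h z) + (∑ w, p w * h w)^2 * p z := by
    intro z; ring
  rw [Finset.sum_congr rfl (fun z _ => this z)]
  rw [Finset.sum_add_distrib, Finset.sum_sub_distrib, ← Finset.mul_sum, ← Finset.mul_sum, hp1]
  ring

lemma var_sqrt_triangle {S : Type} [Fintype S] (p f g : S → ℝ)
    (hp : ∀ z, 0 ≤ p z) (hp1 : ∑ z, p z = 1) :
    Real.sqrt ((∑ z, p z * (f z + g z) ^ 2) - (∑ z, p z * (f z + g z)) ^ 2) ≤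
      Real.sqrt ((∑ z, p z * f z ^ 2) - (∑ z, p z * f z) ^ 2)
      + Real.sqrt ((∑ z, p z * g z ^ 2) - (∑ z, p z * g z) ^ 2) := by
  set cf := ∑ w, p w * f w with hcf
  set cg := ∑ w, p w * g w with hcg
  set F : S → ℝ := fun z => f z - cf with hF
  set G : S → ℝ := fun z => g z - cg with hG
  have hVf : (∑ z, p z * f z ^ 2) - (∑ z, p z * f z) ^ 2 = ∑ z, p z * F z ^ 2 :=
    var_key p f hp1
  have hVg : (∑ z, p z * g z ^ 2) - (∑ z, p z * g z) ^ 2 = ∑ z, p z * G z ^ 2 :=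
    var_key p g hp1
  have hsum : (∑ w, p w * (f w + g w)) = cf + cg := by
    rw [hcf, hcg, ← Finset.sum_add_distrib]
    exact Finset.sum_congr rfl (fun z _ => by ring)
  have hVfg : (∑ z, p z * (f z + g z) ^ 2) - (∑ z, p z * (f z + g z)) ^ 2
      = ∑ z, p z * (F z + G z) ^ 2 := by
    rw [var_key p (fun z => f z + g z) hp1, hsum]
    refine Finset.sum_congr rfl (fun z _ => ?_)
    have : f z + g z - (cf + cg) = F z + G z := by simp [hF, hG]; ring
    rw [this]
  have hVfnn : 0 ≤ ∑ z, p z * F z ^ 2 :=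
    Finset.sum_nonneg (fun z _ => mul_nonneg (hp z) (sq_nonneg _))
  have hVgnn : 0 ≤ ∑ z, p z * G z ^ 2 :=
    Finset.sum_nonneg (fun z _ => mul_nonneg (hp z) (sq_nonneg _))
  -- Cauchy-Schwarz
  have hCS : (∑ z, p z * F z * G z) ^ 2 ≤ (∑ z, p z * F z ^ 2) * (∑ z, p z * G z ^ 2) := by
    have h1 : ∀ z, p z * F z * G z = (Real.sqrt (p z) * F z) * (Real.sqrt (p z) * G z) := by
      intro z
      have h : Real.sqrt (p z) * Real.sqrt (p z) = p z := Real.mul_self_sqrt (hp z)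
      rw [show (Real.sqrt (p z) * F z) * (Real.sqrt (p z) * G z)
          = (Real.sqrt (p z) * Real.sqrt (p z)) * F z * G z by ring, h]
    have h2 : ∀ z, p z * F z ^ 2 = (Real.sqrt (p z) * F z) ^ 2 := by
      intro z
      have h : Real.sqrt (p z) * Real.sqrt (p z) = p z := Real.mul_self_sqrt (hp z)
      rw [show (Real.sqrt (p z) * F z) ^ 2
          = (Real.sqrt (p z) * Real.sqrt (p z)) * F z ^ 2 by ring, h]
    have h3 : ∀ z, p z * G z ^ 2 = (Real.sqrt (p z) * G z) ^ 2 := by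
      intro z
      have h : Real.sqrt (p z) * Real.sqrt (p z) = p z := Real.mul_self_sqrt (hp z)
      rw [show (Real.sqrt (p z) * G z) ^ 2
          = (Real.sqrt (p z) * Real.sqrt (p z)) * G z ^ 2 by ring, h]
    rw [Finset.sum_congr rfl (fun z _ => h1 z), Finset.sum_congr rfl (fun z _ => h2 z),
      Finset.sum_congr rfl (fun z _ => h3 z)]
    exact Finset.sum_mul_sq_le_sq_mul_sq _ _ _
  have hCov : ∑ z, p z * F z * G z
      ≤ Real.sqrt (∑ z, p z * F z ^ 2) * Real.sqrt (∑ z, p z * G z ^ 2) := by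
    calc ∑ z, p z * F z * G z ≤ |∑ z, p z * F z * G z| := le_abs_self _
    _ = Real.sqrt ((∑ z, p z * F z * G z) ^ 2) := (Real.sqrt_sq_eq_abs _).symm
    _ ≤ Real.sqrt ((∑ z, p z * F z ^ 2) * (∑ z, p z * G z ^ 2)) := Real.sqrt_le_sqrt hCS
    _ = _ := Real.sqrt_mul hVfnn _
  have hexpand : ∑ z, p z * (F z + G z) ^ 2
      = (∑ z, p z * F z ^ 2) + 2 * (∑ z, p z * F z * G z) + (∑ z, p z * G z ^ 2) := by
    have : ∀ z, p z * (F z + G z) ^ 2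
        = p z * F z ^ 2 + 2 * (p z * F z * G z) + p z * G z ^ 2 := fun z => by ring
    rw [Finset.sum_congr rfl (fun z _ => this z)]
    rw [Finset.sum_add_distrib, Finset.sum_add_distrib, ← Finset.mul_sum]
  have hfinal : ∑ z, p z * (F z + G z) ^ 2
      ≤ (Real.sqrt (∑ z, p z * F z ^ 2) + Real.sqrt (∑ z, p z * G z ^ 2)) ^ 2 := by
    have e1 : Real.sqrt (∑ z, p z * F z ^ 2) ^ 2 = ∑ z, p z * F z ^ 2 := Real.sq_sqrt hVfnn
    have e2 : Real.sqrt (∑ z, p z * G z ^ 2) ^ 2 = ∑ z, p z * G z ^ 2 := Real.sq_sqrt hVgnn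
    nlinarith [hCov, hexpand]
  rw [hVf, hVg, hVfg]
  calc Real.sqrt (∑ z, p z * (F z + G z) ^ 2)
      ≤ Real.sqrt ((Real.sqrt (∑ z, p z * F z ^ 2) + Real.sqrt (∑ z, p z * G z ^ 2)) ^ 2) :=
        Real.sqrt_le_sqrt hfinal
    _ = |Real.sqrt (∑ z, p z * F z ^ 2) + Real.sqrt (∑ z, p z * G z ^ 2)| :=
        Real.sqrt_sq_eq_abs _
    _ = _ := abs_of_nonneg (by positivity)


lemma det_bound (α γ H : ℝ) (hα0 : 0 ≤ α) (hα1 : α < 1) (hγ0 : 0 ≤ γ) (hγ1 : γ < 1)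
    (hHg : (1-γ)*H = 1) (hH0 : 0 < H) (hH1 : 1 ≤ H) (n : ℕ) (Am : ℝ) (hAmnn : 0 ≤ Am)
    (htel : (α - γ) * Am = γ * α ^ n - γ ^ (n+1)) :
    γ^(n+1)*H + 2*α^(n+1) + 2*α*Am ≤ 4*H*(max α γ)^n + 2*H*((1-α)*Am) := by
  have hg : 0 < 1 - γ := by linarith
  have hmaxnn : (0:ℝ) ≤ max α γ := le_trans hα0 (le_max_left _ _)
  have hmxn : 0 ≤ (max α γ)^n := pow_nonneg hmaxnn n
  by_cases hc : α * (1-γ) ≤ 1-α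
  · have hαH : α ≤ H*(1-α) := by
      have h1 := mul_le_mul_of_nonneg_right hc hH0.le
      calc α = α * ((1-γ)*H) := by rw [hHg]; ring
        _ = α*(1-γ)*H := by ring
        _ ≤ (1-α)*H := h1
        _ = H*(1-α) := by ring
    have h1 : 2*α*Am ≤ 2*H*((1-α)*Am) := by nlinarith [hAmnn, hαH]
    have h2 : γ^(n+1) ≤ (max α γ)^n := by
      calc γ^(n+1) = γ^n * γ := pow_succ γ n
        _ ≤ γ^n * 1 := by nlinarith [pow_nonneg hγ0 n]
        _ = γ^n := mul_one _
        _ ≤ (max α γ)^n := pow_le_pow_left₀ hγ0 (le_max_right α γ) n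
    have h3 : α^(n+1) ≤ (max α γ)^n := by
      calc α^(n+1) = α^n * α := pow_succ α n
        _ ≤ α^n * 1 := by nlinarith [pow_nonneg hα0 n]
        _ = α^n := mul_one _
        _ ≤ (max α γ)^n := pow_le_pow_left₀ hα0 (le_max_left α γ) n
    nlinarith [h1, h2, h3, hmxn, hH1, hH0.le, mul_le_mul_of_nonneg_left h2 hH0.le]
  · push_neg at hc
    have hγα : γ < α := by
      have h1 : α * (1-γ) ≤ 1*(1-γ) := mul_le_mul_of_nonneg_right hα1.le hg.le
      nlinarith [hc]
    have hmax : max α γ = α := max_eq_left hγα.le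
    rw [hmax]
    have hd : 0 < α - γ := by linarith
    have hAub : (α - γ) * Am ≤ γ * α^n := by
      nlinarith [htel, pow_nonneg hγ0 (n+1)]
    have hgn : γ^n ≤ α^n := pow_le_pow_left₀ hγ0 hγα.le n
    have hstep : (α - H*(1-α)) * (1-γ) ≤ (α*(α-γ)*H) * (1-γ) := by
      have e1 : (α - H*(1-α)) * (1-γ) = α*(1-γ) - (1-α) * ((1-γ)*H) := by ring
      have e2 : (α*(α-γ)*H) * (1-γ) = α*(α-γ) * ((1-γ)*H) := by ring
      rw [e1, e2, hHg]
      nlinarith [sq_nonneg (1-α)]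
    have hc1 : α - H*(1-α) ≤ α*(α-γ)*H := le_of_mul_le_mul_right hstep hg
    have hc2 : (α - H*(1-α)) * Am ≤ (α*(α-γ)*H) * Am :=
      mul_le_mul_of_nonneg_right hc1 hAmnn
    have hc4 : α*H*((α-γ)*Am) ≤ α*H*(γ*α^n) :=
      mul_le_mul_of_nonneg_left hAub (mul_nonneg hα0 hH0.le)
    have hγH4 : γ*H + 2*α + 2*(α*γ*H) ≤ 4*H := by
      have h5 : (γ*H + 2*α + 2*(α*γ*H)) * (1-γ) ≤ (4*H) * (1-γ) := by
        have e : (γ*H + 2*α + 2*(α*γ*H)) * (1-γ)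
            = γ*((1-γ)*H) + 2*α*(1-γ) + 2*α*γ*((1-γ)*H) := by ring
        have e2 : (4*H)*(1-γ) = 4*((1-γ)*H) := by ring
        rw [e, e2, hHg]
        nlinarith []
      exact le_of_mul_le_mul_right h5 hg
    have hmulti := mul_le_mul_of_nonneg_right hγH4 (pow_nonneg hα0 n)
    have hx1 : γ^(n+1)*H ≤ γ*H*α^n := by
      rw [pow_succ]
      nlinarith [hgn, mul_nonneg hγ0 hH0.le, pow_nonneg hγ0 n]
    have hpa : α^(n+1) = α^n * α := pow_succ α n
    nlinarith [hc2, hc4, hmulti, hx1, hpa, hAmnn, pow_nonneg hα0 n]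
end MDVIHelpers



set_option maxHeartbeats 4000000 in
/-- Lemma 4.6: value estimation variance bound. -/
theorem mdvi_value_estimation_variance_bound
    (α : ℝ) (hα0 : 0 ≤ α) (hα1 : α < 1)
    (S A : Type) [Fintype S] [Fintype A] [Nonempty S] [Nonempty A] [DecidableEq A]
    (P : S → A → S → ℝ) (hP : IsKernel P)
    (r : S → A → ℝ) (hr : ∀ x a, |r x a| ≤ 1)
    (γ H : ℝ) (hγ0 : 0 ≤ γ) (hγ1 : γ < 1) (hH : H = 1 / (1 - γ))
    (Qpol : (S → A → ℝ) → S → A → ℝ)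
    (hQ : ∀ po, IsPolicy po → bellmanOp P r γ po (Qpol po) = Qpol po)
    (pstar : S → A → ℝ) (hpstar : IsPolicy pstar)
    (hopt : ∀ po, IsPolicy po → ∀ x, polAct po (Qpol po) x ≤ polAct pstar (Qpol pstar) x)
    (K M : ℕ) (hM : 1 ≤ M)
    (y : ℕ → ℕ → S → A → S)
    (w v : ℕ → S → ℝ) (sq qv : ℕ → S → A → ℝ)
    (hs0 : ∀ x a, sq 0 x a = 0) (hw0 : ∀ x, w 0 x = 0)
    (hv : ∀ k x, v k x = w k x - α * w (k - 1) x)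
    (hqv : ∀ k x a, qv (k + 1) x a
      = r x a + (γ / (M : ℝ)) * ∑ m ∈ Finset.range M, v k (y k m x a))
    (hsq : ∀ k x a, sq (k + 1) x a = qv (k + 1) x a + α * sq k x a)
    (hwk : ∀ k x, w (k + 1) x = ⨆ a, sq (k + 1) x a)
    (pol : ℕ → S → A)
    (hgreedy : ∀ k x a, sq k x a ≤ sq k x (pol k x))
    (εf Ef : ℕ → S → A → ℝ)
    (hεf : ∀ k x a, εf (k + 1) x a
      = (γ / (M : ℝ)) * ∑ m ∈ Finset.range M, v k (y k m x a) - γ * mdpP P (v k) x a)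
    (hEf : ∀ k x a, Ef k x a = ∑ j ∈ Finset.range k, α ^ (k - 1 - j) * εf (j + 1) x a)
    (δ : ℝ) (hδ0 : 0 < δ) (hδ1 : δ < 1)
    (hE1 : ∀ k ∈ Finset.Icc 1 K, ∀ x a, |Ef k x a|
      < 3 * H * Real.sqrt (((1 : ℝ) / (1 - α)) *
          Real.log ((8 * K * Fintype.card S * Fintype.card A : ℝ) / δ) / (M : ℝ)))
    (hE2 : ∀ k ∈ Finset.Icc 1 K, ∀ x a, |εf k x a|
      < 3 * H * Real.sqrt (
          Real.log ((8 * K * Fintype.card S * Fintype.card A : ℝ) / δ) / (M : ℝ)))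
    :
    (∀ k ∈ Finset.Icc 1 K, ∀ x a,
      sigmaP P (v k) x a ≤
        2 * H * min 1
          (2 * max α γ ^ (k - 1)
            + (∑ j ∈ Finset.range (k - 1), γ ^ (k - 1 - j) * α ^ j) / ((1 : ℝ) / (1 - α))
            + 6 * H * Real.sqrt (
                Real.log ((8 * K * Fintype.card S * Fintype.card A : ℝ) / δ) / (M : ℝ)))
        + sigmaP P (polAct pstar (Qpol pstar)) x a) ∧
    (∀ x a, sigmaP P (v 0) x a = 0) := by
  classical
  obtain ⟨hPn, hPs⟩ := hP
  have hg : 0 < 1 - γ := by linarith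
  have hu : 0 < 1 - α := by linarith
  have hH0 : 0 < H := by rw [hH]; positivity
  have hHg : (1 - γ) * H = 1 := by rw [hH]; field_simp
  have hH1 : 1 ≤ H := by nlinarith [hHg, hH0]
  have hHγ : 1 + γ * H = H := by nlinarith [hHg]
  have hM0 : (0:ℝ) < (M:ℝ) := by
    have : (1:ℝ) ≤ (M:ℝ) := by exact_mod_cast hM
    linarith
  -- abbreviations
  set Q : S → A → ℝ := Qpol pstar with hQdef
  set V : S → ℝ := polAct pstar (Qpol pstar) with hVdef
  -- basic mdpP facts
  have mdpP_abs : ∀ (f : S → ℝ) (c : ℝ), (∀ z, |f z| ≤ c) → ∀ x a, |mdpP P f x a| ≤ c := by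
    intro f c hf x a
    have h1 : |mdpP P f x a| ≤ ∑ z, |P x a z * f z| := Finset.abs_sum_le_sum_abs _ _
    have h2 : ∀ z, |P x a z * f z| ≤ P x a z * c := by
      intro z
      rw [abs_mul, abs_of_nonneg (hPn x a z)]
      exact mul_le_mul_of_nonneg_left (hf z) (hPn x a z)
    calc |mdpP P f x a| ≤ ∑ z, P x a z * c := h1.trans (Finset.sum_le_sum (fun z _ => h2 z))
      _ = c := by rw [← Finset.sum_mul, hPs x a, one_mul]
  have polAct_abs : ∀ (po : S → A → ℝ), IsPolicy po → ∀ (f : S → A → ℝ) (c : ℝ),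
      (∀ x a, |f x a| ≤ c) → ∀ x, |polAct po f x| ≤ c := by
    intro po hpo f c hf x
    have h1 : |polAct po f x| ≤ ∑ a, |po x a * f x a| := Finset.abs_sum_le_sum_abs _ _
    have h2 : ∀ a, |po x a * f x a| ≤ po x a * c := by
      intro a
      rw [abs_mul, abs_of_nonneg (hpo.1 x a)]
      exact mul_le_mul_of_nonneg_left (hf x a) (hpo.1 x a)
    calc |polAct po f x| ≤ ∑ a, po x a * c := h1.trans (Finset.sum_le_sum (fun a _ => h2 a))
      _ = c := by rw [← Finset.sum_mul, hpo.2 x, one_mul]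
  -- Q fixed point facts
  have hQfixgen : ∀ po, IsPolicy po → ∀ x a,
      Qpol po x a = r x a + γ * mdpP P (polAct po (Qpol po)) x a := by
    intro po hpo x a
    conv_lhs => rw [← hQ po hpo]
    rfl
  have hQbnd : ∀ po, IsPolicy po → ∀ x a, |Qpol po x a| ≤ H := by
    intro po hpo
    obtain ⟨⟨x₀, a₀⟩, hmax⟩ := Finite.exists_max (fun pp : S × A => |Qpol po pp.1 pp.2|)
    have h1 : |mdpP P (polAct po (Qpol po)) x₀ a₀| ≤ |Qpol po x₀ a₀| :=
      mdpP_abs _ _ (fun z => polAct_abs po hpo _ _ (fun x a => hmax (x, a)) z) x₀ a₀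
    have hC : |Qpol po x₀ a₀| ≤ 1 + γ * |Qpol po x₀ a₀| := by
      conv_lhs => rw [hQfixgen po hpo x₀ a₀]
      calc |r x₀ a₀ + γ * mdpP P (polAct po (Qpol po)) x₀ a₀|
          ≤ |r x₀ a₀| + |γ * mdpP P (polAct po (Qpol po)) x₀ a₀| := abs_add_le _ _
        _ ≤ 1 + γ * |Qpol po x₀ a₀| := by
            rw [abs_mul, abs_of_nonneg hγ0]
            exact add_le_add (hr x₀ a₀) (mul_le_mul_of_nonneg_left h1 hγ0)
    have hCH : |Qpol po x₀ a₀| ≤ H := by nlinarith [hC, hHg, hH0]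
    intro x a
    exact (hmax (x, a)).trans hCH
  have hVabs : ∀ x, |V x| ≤ H := polAct_abs pstar hpstar _ _ (hQbnd pstar hpstar)
  have hQabs : ∀ x a, |Q x a| ≤ H := hQbnd pstar hpstar
  have hQfix : ∀ x a, Q x a = r x a + γ * mdpP P V x a := hQfixgen pstar hpstar
  -- greedy policy improvement: V is the row-max of Q
  have hgmax : ∀ x : S, ∃ a : A, ∀ b : A, Q x b ≤ Q x a := fun x => Finite.exists_max _
  choose gf hgf using hgmax
  have hpogpol : IsPolicy (detPol gf) := by
    constructor
    · intro x a
      by_cases h : a = gf x <;> simp [detPol, h]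
    · intro x
      simp [detPol]
  have hpogact : ∀ (f : S → A → ℝ) (x : S), polAct (detPol gf) f x = f x (gf x) := by
    intro f x
    simp only [polAct, detPol, ite_mul, one_mul, zero_mul]
    rw [Finset.sum_ite_eq' Finset.univ (gf x) (fun a => f x a)]
    simp
  have hVleQg : ∀ z, V z ≤ Q z (gf z) := by
    intro z
    calc V z = ∑ b, pstar z b * Q z b := rfl
      _ ≤ ∑ b, pstar z b * Q z (gf z) :=
          Finset.sum_le_sum (fun b _ => mul_le_mul_of_nonneg_left (hgf z b) (hpstar.1 z b))
      _ = Q z (gf z) := by rw [← Finset.sum_mul, hpstar.2 z, one_mul]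
  have honestep : ∀ x a, Q x a ≤ r x a + γ * mdpP P (fun z => Q z (gf z)) x a := by
    intro x a
    rw [hQfix x a]
    have hmono : mdpP P V x a ≤ mdpP P (fun z => Q z (gf z)) x a :=
      Finset.sum_le_sum (fun z _ => mul_le_mul_of_nonneg_left (hVleQg z) (hPn x a z))
    nlinarith [mul_le_mul_of_nonneg_left hmono hγ0]
  have hiter : ∀ n x a, Q x a ≤ Qpol (detPol gf) x a + γ ^ n * (2 * H) := by
    intro n
    induction n with
    | zero =>
      intro x a
      have h1 := abs_le.mp (hQabs x a)
      have h2 := abs_le.mp (hQbnd (detPol gf) hpogpol x a)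
      simp only [pow_zero, one_mul]
      linarith [h1.2, h2.1]
    | succ n ih =>
      intro x a
      have h2 : mdpP P (fun z => Q z (gf z)) x a
          ≤ mdpP P (fun z => Qpol (detPol gf) z (gf z) + γ ^ n * (2*H)) x a :=
        Finset.sum_le_sum (fun z _ => mul_le_mul_of_nonneg_left (ih z (gf z)) (hPn x a z))
      have h3 : mdpP P (fun z => Qpol (detPol gf) z (gf z) + γ ^ n * (2*H)) x a
          = mdpP P (fun z => Qpol (detPol gf) z (gf z)) x a + γ ^ n * (2*H) := by
        simp only [mdpP]
        rw [Finset.sum_congr rfl (fun z _ => mul_add (P x a z) _ _), Finset.sum_add_distrib,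
          ← Finset.sum_mul, hPs x a, one_mul]
      have h4 : Qpol (detPol gf) x a
          = r x a + γ * mdpP P (fun z => Qpol (detPol gf) z (gf z)) x a := by
        have := hQfixgen (detPol gf) hpogpol x a
        rwa [show polAct (detPol gf) (Qpol (detPol gf)) = fun z => Qpol (detPol gf) z (gf z)
          from funext (fun z => hpogact _ z)] at this
      calc Q x a ≤ r x a + γ * mdpP P (fun z => Q z (gf z)) x a := honestep x a
        _ ≤ r x a + γ * (mdpP P (fun z => Qpol (detPol gf) z (gf z)) x a + γ ^ n * (2*H)) := by
            have := mul_le_mul_of_nonneg_left (h2.trans (le_of_eq h3)) hγ0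
            linarith
        _ = (r x a + γ * mdpP P (fun z => Qpol (detPol gf) z (gf z)) x a) + γ ^ (n+1) * (2*H) := by
            ring
        _ = Qpol (detPol gf) x a + γ ^ (n+1) * (2*H) := by rw [← h4]
  have hQleV : ∀ x a, Q x a ≤ V x := by
    intro x a
    have hQleQg : ∀ x a, Q x a ≤ Qpol (detPol gf) x a := by
      intro x a
      apply le_of_forall_pos_le_add
      intro ε hε
      obtain ⟨n, hn⟩ := exists_pow_lt_of_lt_one (div_pos hε (by positivity : (0:ℝ) < 2*H)) hγ1
      have h2 : γ ^ n * (2*H) < ε := (lt_div_iff₀ (by positivity : (0:ℝ) < 2*H)).mp hn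
      linarith [hiter n x a]
    calc Q x a ≤ Q x (gf x) := hgf x a
      _ ≤ Qpol (detPol gf) x (gf x) := hQleQg x (gf x)
      _ = polAct (detPol gf) (Qpol (detPol gf)) x := (hpogact _ x).symm
      _ ≤ V x := hopt (detPol gf) hpogpol x
  have hVsup : ∀ x, V x = ⨆ a, Q x a := by
    intro x
    have hbQ : BddAbove (Set.range (fun a => Q x a)) := (Set.finite_range _).bddAbove
    exact le_antisymm ((hVleQg x).trans (le_ciSup hbQ (gf x))) (ciSup_le (fun a => hQleV x a))
  -- elementary algorithm facts
  have hv0 : ∀ z, v 0 z = 0 := by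
    intro z
    rw [hv 0 z]
    norm_num [hw0 z]
  have wsup : ∀ k x, w k x = ⨆ a, sq k x a := by
    intro k x
    cases k with
    | zero =>
      rw [hw0 x]
      simp [hs0]
    | succ n => exact hwk n x
  have hqexp : ∀ k x a, qv (k+1) x a = r x a + γ * mdpP P (v k) x a + εf (k+1) x a := by
    intro k x a
    rw [hqv k x a, hεf k x a]
    ring
  have hEf0 : ∀ x a, Ef 0 x a = 0 := by
    intro x a
    rw [hEf]
    simp
  have hEfsucc : ∀ k x a, Ef (k+1) x a = εf (k+1) x a + α * Ef k x a := by
    intro k x a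
    rw [hEf (k+1) x a, hEf k x a, Finset.sum_range_succ]
    have e0 : k + 1 - 1 - k = 0 := by omega
    rw [e0, pow_zero, one_mul, Finset.mul_sum]
    have hc : ∀ j ∈ Finset.range k, α ^ (k + 1 - 1 - j) * εf (j+1) x a
        = α * (α ^ (k - 1 - j) * εf (j+1) x a) := by
      intro j hj
      have hj' : j < k := Finset.mem_range.mp hj
      have e : k + 1 - 1 - j = (k - 1 - j) + 1 := by omega
      rw [e, pow_succ]
      ring
    rw [Finset.sum_congr rfl hc]
    ring
  have SID : ∀ k x a, sq (k+1) x a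
      = (∑ j ∈ Finset.range (k+1), α ^ j) * r x a + γ * mdpP P (w k) x a + Ef (k+1) x a := by
    intro k
    induction k with
    | zero =>
      intro x a
      rw [hsq 0 x a, hs0 x a, hqexp 0 x a]
      have h1 : mdpP P (v 0) x a = 0 := by
        simp [mdpP, hv0]
      have h2 : mdpP P (w 0) x a = 0 := by
        simp [mdpP, hw0]
      rw [h1, h2, hEfsucc 0 x a, hEf0]
      simp
    | succ n ih =>
      intro x a
      rw [hsq (n+1) x a, hqexp (n+1) x a, ih x a]
      have hlin : mdpP P (w (n+1)) x a = mdpP P (v (n+1)) x a + α * mdpP P (w n) x a := by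
        simp only [mdpP]
        rw [Finset.mul_sum, ← Finset.sum_add_distrib]
        refine Finset.sum_congr rfl (fun z _ => ?_)
        rw [hv (n+1) z]
        simp only [Nat.add_sub_cancel]
        ring
      have hA : (∑ j ∈ Finset.range (n+2), α ^ j) = 1 + α * ∑ j ∈ Finset.range (n+1), α ^ j := by
        rw [Finset.sum_range_succ' (fun j => α ^ j) (n+1), Finset.mul_sum]
        rw [Finset.sum_congr rfl (fun j (_ : j ∈ Finset.range (n+1)) =>
          (by rw [pow_succ]; ring : α ^ (j+1) = α * α ^ j))]
        simp
        ring
      rw [hEfsucc (n+1) x a, hA, hlin]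
      ring
  -- uniform bound on v
  have Vb : ∀ k z, |v k z| ≤ H := by
    intro k
    induction k with
    | zero =>
      intro z
      rw [hv0 z]
      simpa using hH0.le
    | succ n ih =>
      intro z
      have hq : ∀ a, |sq (n+1) z a - α * sq n z a| ≤ H := by
        intro a
        have e : sq (n+1) z a - α * sq n z a = qv (n+1) z a := by
          rw [hsq n z a]; ring
        rw [e, hqv n z a]
        have hsum : |∑ m ∈ Finset.range M, v n (y n m z a)| ≤ (M:ℝ) * H := by
          calc |∑ m ∈ Finset.range M, v n (y n m z a)|
              ≤ ∑ m ∈ Finset.range M, |v n (y n m z a)| := Finset.abs_sum_le_sum_abs _ _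
            _ ≤ ∑ _m ∈ Finset.range M, H := Finset.sum_le_sum (fun m _ => ih _)
            _ = (M:ℝ) * H := by rw [Finset.sum_const, Finset.card_range, nsmul_eq_mul]
        calc |r z a + γ / (M:ℝ) * ∑ m ∈ Finset.range M, v n (y n m z a)|
            ≤ |r z a| + |γ / (M:ℝ) * ∑ m ∈ Finset.range M, v n (y n m z a)| := abs_add_le _ _
          _ ≤ 1 + (γ / (M:ℝ)) * ((M:ℝ) * H) := by
              rw [abs_mul, abs_of_nonneg (by positivity : (0:ℝ) ≤ γ / (M:ℝ))]
              exact add_le_add (hr z a) (mul_le_mul_of_nonneg_left hsum (by positivity))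
          _ = 1 + γ * H := by field_simp
          _ = H := hHγ
      have e2 : v (n+1) z = (⨆ a, sq (n+1) z a) - α * ⨆ a, sq n z a := by
        rw [hv (n+1) z]
        simp only [Nat.add_sub_cancel]
        rw [wsup (n+1) z, wsup n z]
      rw [e2]
      exact MDVIHelpers.sup_bracket _ _ α H hα0 hq
  -- noise scale constants
  set L : ℝ := Real.log ((8 * K * Fintype.card S * Fintype.card A : ℝ) / δ) with hLdef
  set eB : ℝ := 3 * H * Real.sqrt (L / (M:ℝ)) with heBdef
  set EB : ℝ := 3 * H * Real.sqrt ((1:ℝ) / (1 - α) * L / (M:ℝ)) with hEBdef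
  have heBnn : 0 ≤ eB := by
    rw [heBdef]
    have := Real.sqrt_nonneg (L / (M:ℝ))
    nlinarith [hH0]
  have hEBnn : 0 ≤ EB := by
    rw [hEBdef]
    have := Real.sqrt_nonneg ((1:ℝ) / (1 - α) * L / (M:ℝ))
    nlinarith [hH0]
  have hE1' : ∀ k, 1 ≤ k → k ≤ K → ∀ x a, |Ef k x a| ≤ EB := fun k h1 h2 x a =>
    (hE1 k (Finset.mem_Icc.mpr ⟨h1, h2⟩) x a).le
  have hE2' : ∀ k, 1 ≤ k → k ≤ K → ∀ x a, |εf k x a| ≤ eB := fun k h1 h2 x a =>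
    (hE2 k (Finset.mem_Icc.mpr ⟨h1, h2⟩) x a).le
  have hEBeq : (1 - α) * EB = Real.sqrt (1 - α) * eB := by
    rw [hEBdef, heBdef]
    have h1 : (1:ℝ) / (1 - α) * L / (M:ℝ) = ((1:ℝ)/(1 - α)) * (L / (M:ℝ)) := by ring
    rw [h1, Real.sqrt_mul (by positivity) (L / (M:ℝ))]
    have h2 : Real.sqrt ((1:ℝ)/(1-α)) = 1 / Real.sqrt (1-α) := by
      rw [one_div, one_div, Real.sqrt_inv]
    rw [h2]
    have h3 : Real.sqrt (1-α) ≠ 0 := ne_of_gt (Real.sqrt_pos.mpr hu)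
    have h4 : Real.sqrt (1-α) * Real.sqrt (1-α) = 1 - α := Real.mul_self_sqrt hu.le
    have h5 : (1-α) * (1 / Real.sqrt (1-α)) = Real.sqrt (1-α) := by
      rw [mul_one_div, div_eq_iff h3, h4]
    linear_combination (3 * H * Real.sqrt (L / (M:ℝ))) * h5
  -- the bound sequences
  set hB : ℕ → ℝ := fun k => γ ^ k * H + (∑ i ∈ Finset.range k, γ ^ (k - 1 - i) * α ^ (i+1))
      + (1 - α) * EB * (∑ i ∈ Finset.range k, γ ^ i) with hBdef
  set zB : ℕ → ℝ := fun k => (∑ t ∈ Finset.range k, γ ^ (k - 1 - t) * α ^ t)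
      + ((1 - α) * EB + eB) * (∑ i ∈ Finset.range k, γ ^ i) with zBdef
  have sum_shift : ∀ (c : ℝ) (k : ℕ), (∑ i ∈ Finset.range (k+1), γ ^ (k - i) * c ^ i)
      = c ^ k + γ * ∑ i ∈ Finset.range k, γ ^ (k - 1 - i) * c ^ i := by
    intro c k
    rw [Finset.sum_range_succ]
    have e : k - k = 0 := by omega
    rw [e, pow_zero, one_mul, Finset.mul_sum]
    have hc : ∀ i ∈ Finset.range k, γ ^ (k - i) * c ^ i = γ * (γ ^ (k-1-i) * c ^ i) := by
      intro i hi
      have hi' : i < k := Finset.mem_range.mp hi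
      have e2 : k - i = (k - 1 - i) + 1 := by omega
      rw [e2, pow_succ]
      ring
    rw [Finset.sum_congr rfl hc]
    ring
  have geo_shift : ∀ k : ℕ, (∑ i ∈ Finset.range (k+1), γ ^ i)
      = 1 + γ * ∑ i ∈ Finset.range k, γ ^ i := by
    intro k
    rw [Finset.sum_range_succ' (fun i => γ ^ i) k, Finset.mul_sum]
    rw [Finset.sum_congr rfl (fun j (_ : j ∈ Finset.range k) =>
      (by rw [pow_succ]; ring : γ ^ (j+1) = γ * γ ^ j))]
    simp
    ring
  have sum_shift2 : ∀ (c : ℝ) (k : ℕ), (∑ i ∈ Finset.range (k+1), γ ^ (k - i) * c ^ (i+1))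
      = c ^ (k+1) + γ * ∑ i ∈ Finset.range k, γ ^ (k - 1 - i) * c ^ (i+1) := by
    intro c k
    rw [Finset.sum_range_succ]
    have e : k - k = 0 := by omega
    rw [e, pow_zero, one_mul, Finset.mul_sum]
    have hc : ∀ i ∈ Finset.range k, γ ^ (k - i) * c ^ (i+1) = γ * (γ ^ (k-1-i) * c ^ (i+1)) := by
      intro i hi
      have hi' : i < k := Finset.mem_range.mp hi
      have e2 : k - i = (k - 1 - i) + 1 := by omega
      rw [e2, pow_succ]
      ring
    rw [Finset.sum_congr rfl hc]
    ring
  have hBrec : ∀ k, hB (k+1) = γ * hB k + α ^ (k+1) + (1 - α) * EB := by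
    intro k
    simp only [hBdef, Nat.add_sub_cancel]
    rw [sum_shift2 α k, geo_shift k]
    rw [pow_succ γ k]
    ring
  have zBrec : ∀ k, zB (k+1) = γ * zB k + α ^ k + ((1 - α) * EB + eB) := by
    intro k
    simp only [zBdef, Nat.add_sub_cancel]
    rw [sum_shift α k, geo_shift k]
    ring
  -- contraction for the scaled value functions
  have Hcl : ∀ k, k ≤ K → ∀ x, |(1 - α) * w k x - V x| ≤ hB k := by
    intro k
    induction k with
    | zero =>
      intro _ x
      rw [hw0 x]
      simp only [mul_zero, zero_sub, abs_neg]
      have e : hB 0 = H := by simp [hBdef]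
      rw [e]
      exact hVabs x
    | succ n ih =>
      intro hK x
      have hKn : n ≤ K := by omega
      have hpt : ∀ a, |Q x a - (1-α) * sq (n+1) x a|
          ≤ γ * hB n + α ^ (n+1) + (1-α) * EB := by
        intro a
        have hm : mdpP P (fun z => (1-α) * w n z - V z) x a
            = (1-α) * mdpP P (w n) x a - mdpP P V x a := by
          simp only [mdpP]
          rw [Finset.mul_sum, ← Finset.sum_sub_distrib]
          exact Finset.sum_congr rfl (fun z _ => by ring)
        have hgeom : (1 - α) * (∑ j ∈ Finset.range (n+1), α ^ j) = 1 - α^(n+1) :=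
          MDVIHelpers.geom_id α (n+1)
        have e : Q x a - (1-α) * sq (n+1) x a
            = α^(n+1) * r x a - (1-α) * Ef (n+1) x a
              - γ * mdpP P (fun z => (1-α) * w n z - V z) x a := by
          rw [SID n x a, hQfix x a, hm]
          linear_combination (-(r x a)) * hgeom
        rw [e]
        have t1 : |α^(n+1) * r x a| ≤ α^(n+1) := by
          rw [abs_mul, abs_of_nonneg (pow_nonneg hα0 _)]
          exact mul_le_of_le_one_right (pow_nonneg hα0 _) (hr x a)
        have t2 : |(1-α) * Ef (n+1) x a| ≤ (1-α) * EB := by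
          rw [abs_mul, abs_of_nonneg hu.le]
          exact mul_le_mul_of_nonneg_left (hE1' (n+1) (by omega) hK x a) hu.le
        have t3 : |γ * mdpP P (fun z => (1-α) * w n z - V z) x a| ≤ γ * hB n := by
          rw [abs_mul, abs_of_nonneg hγ0]
          exact mul_le_mul_of_nonneg_left (mdpP_abs _ _ (fun z => ih hKn z) x a) hγ0
        calc |α^(n+1) * r x a - (1-α) * Ef (n+1) x a
              - γ * mdpP P (fun z => (1-α) * w n z - V z) x a|
            ≤ |α^(n+1) * r x a - (1-α) * Ef (n+1) x a|
              + |γ * mdpP P (fun z => (1-α) * w n z - V z) x a| := abs_sub _ _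
          _ ≤ (|α^(n+1) * r x a| + |(1-α) * Ef (n+1) x a|)
              + |γ * mdpP P (fun z => (1-α) * w n z - V z) x a| :=
                add_le_add_left (abs_sub _ _) _
          _ ≤ γ * hB n + α ^ (n+1) + (1-α) * EB := by linarith [t1, t2, t3]
      have hbr : |V x - (1-α) * w (n+1) x| ≤ γ * hB n + α^(n+1) + (1-α) * EB := by
        rw [hVsup x, wsup (n+1) x]
        have : ∀ a, |Q x a - (1-α) * sq (n+1) x a| ≤ γ * hB n + α ^ (n+1) + (1-α) * EB := hpt
        exact MDVIHelpers.sup_bracket (fun a => Q x a) (fun a => sq (n+1) x a) (1-α) _ hu.le this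
      rw [abs_sub_comm, hBrec n]
      linarith [hbr]
  -- contraction for increments of w
  have Zcl : ∀ k, k + 1 ≤ K → ∀ x, |w (k+1) x - w k x| ≤ zB (k+1) := by
    intro k
    induction k with
    | zero =>
      intro _ x
      have e : w 1 x - w 0 x = (⨆ a, sq 1 x a) - 1 * (⨆ _a : A, (0:ℝ)) := by
        rw [wsup 1 x, hw0 x, ciSup_const]
        ring
      rw [e]
      have hz1 : zB 1 = 1 + ((1-α) * EB + eB) := by
        simp [zBdef]
      refine MDVIHelpers.sup_bracket _ _ 1 (zB 1) (by norm_num) ?_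
      intro a
      have hsq1 : sq 1 x a = r x a := by
        rw [hsq 0 x a, hs0 x a, hqv 0 x a]
        rw [Finset.sum_congr rfl (fun m (_ : m ∈ Finset.range M) => hv0 (y 0 m x a))]
        simp
      rw [hsq1]
      simp only [mul_zero, sub_zero]
      rw [hz1]
      linarith [hr x a, mul_nonneg hu.le hEBnn, heBnn]
    | succ n ih =>
      intro hK x
      have hKn : n + 1 ≤ K := by omega
      have hpt : ∀ a, |sq (n+2) x a - 1 * sq (n+1) x a|
          ≤ γ * zB (n+1) + α^(n+1) + ((1-α)*EB + eB) := by
        intro a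
        have hm : mdpP P (fun z => w (n+1) z - w n z) x a
            = mdpP P (w (n+1)) x a - mdpP P (w n) x a := by
          simp only [mdpP]
          rw [← Finset.sum_sub_distrib]
          exact Finset.sum_congr rfl (fun z _ => by ring)
        have e : sq (n+2) x a - 1 * sq (n+1) x a
            = α^(n+1) * r x a + γ * mdpP P (fun z => w (n+1) z - w n z) x a
              - (1-α) * Ef (n+1) x a + εf (n+2) x a := by
          rw [SID (n+1) x a, SID n x a, hm, Finset.sum_range_succ, hEfsucc (n+1) x a]
          ring
        rw [e]
        have t1 : |α^(n+1) * r x a| ≤ α^(n+1) := by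
          rw [abs_mul, abs_of_nonneg (pow_nonneg hα0 _)]
          exact mul_le_of_le_one_right (pow_nonneg hα0 _) (hr x a)
        have t2 : |(1-α) * Ef (n+1) x a| ≤ (1-α) * EB := by
          rw [abs_mul, abs_of_nonneg hu.le]
          exact mul_le_mul_of_nonneg_left (hE1' (n+1) (by omega) hKn x a) hu.le
        have t3 : |γ * mdpP P (fun z => w (n+1) z - w n z) x a| ≤ γ * zB (n+1) := by
          rw [abs_mul, abs_of_nonneg hγ0]
          exact mul_le_mul_of_nonneg_left (mdpP_abs _ _ (fun z => ih hKn z) x a) hγ0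
        have t4 : |εf (n+2) x a| ≤ eB := hE2' (n+2) (by omega) hK x a
        calc |α^(n+1) * r x a + γ * mdpP P (fun z => w (n+1) z - w n z) x a
              - (1-α) * Ef (n+1) x a + εf (n+2) x a|
            ≤ |α^(n+1) * r x a + γ * mdpP P (fun z => w (n+1) z - w n z) x a
              - (1-α) * Ef (n+1) x a| + |εf (n+2) x a| := abs_add_le _ _
          _ ≤ (|α^(n+1) * r x a + γ * mdpP P (fun z => w (n+1) z - w n z) x a|
              + |(1-α) * Ef (n+1) x a|) + |εf (n+2) x a| := add_le_add_left (abs_sub _ _) _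
          _ ≤ ((|α^(n+1) * r x a| + |γ * mdpP P (fun z => w (n+1) z - w n z) x a|)
              + |(1-α) * Ef (n+1) x a|) + |εf (n+2) x a| := by
                have := abs_add_le (α^(n+1) * r x a)
                  (γ * mdpP P (fun z => w (n+1) z - w n z) x a)
                linarith
          _ ≤ γ * zB (n+1) + α^(n+1) + ((1-α)*EB + eB) := by linarith [t1, t2, t3, t4]
      have e2 : w (n+2) x - w (n+1) x = (⨆ a, sq (n+2) x a) - 1 * ⨆ a, sq (n+1) x a := by
        rw [wsup (n+2) x, wsup (n+1) x]
        ring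
      rw [e2, zBrec (n+1)]
      exact MDVIHelpers.sup_bracket _ _ 1 _ (by norm_num) hpt
  -- sigma lemmas
  have hsig_le : ∀ (f : S → ℝ) (c : ℝ) (x : S) (a : A), 0 ≤ c → (∀ z, |f z| ≤ c)
      → sigmaP P f x a ≤ c := by
    intro f c x a hc hf
    simp only [sigmaP]
    have h2 : mdpP P (fun z => f z ^ 2) x a ≤ c^2 := by
      have hz : ∀ z, P x a z * f z ^ 2 ≤ P x a z * c^2 := by
        intro z
        refine mul_le_mul_of_nonneg_left ?_ (hPn x a z)
        calc f z ^ 2 = |f z| ^ 2 := (sq_abs _).symm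
          _ ≤ c ^ 2 := by nlinarith [abs_nonneg (f z), hf z]
      calc mdpP P (fun z => f z^2) x a ≤ ∑ z, P x a z * c^2 :=
            Finset.sum_le_sum (fun z _ => hz z)
        _ = c^2 := by rw [← Finset.sum_mul, hPs x a, one_mul]
    have h1 : mdpP P (fun z => f z ^ 2) x a - (mdpP P f x a)^2 ≤ c^2 := by
      nlinarith [sq_nonneg (mdpP P f x a)]
    calc Real.sqrt (mdpP P (fun z => f z ^ 2) x a - (mdpP P f x a)^2)
        ≤ Real.sqrt (c^2) := Real.sqrt_le_sqrt h1
      _ = c := by rw [Real.sqrt_sq hc]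
  have hsig_tri : ∀ (f : S → ℝ) (x : S) (a : A),
      sigmaP P f x a ≤ sigmaP P (fun z => f z - V z) x a + sigmaP P V x a := by
    intro f x a
    have e : f = fun z => (f z - V z) + V z := funext (fun z => by ring)
    have h := MDVIHelpers.var_sqrt_triangle (P x a) (fun z => f z - V z) V
      (hPn x a) (hPs x a)
    simp only [sigmaP, mdpP]
    calc Real.sqrt ((∑ z, P x a z * f z ^ 2) - (∑ z, P x a z * f z) ^ 2)
        = Real.sqrt ((∑ z, P x a z * ((f z - V z) + V z) ^ 2)
            - (∑ z, P x a z * ((f z - V z) + V z)) ^ 2) := by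
          rw [Finset.sum_congr rfl (fun z _ => by ring :
            ∀ z ∈ Finset.univ, P x a z * f z ^ 2 = P x a z * ((f z - V z) + V z) ^ 2)]
          rw [Finset.sum_congr rfl (fun z _ => by ring :
            ∀ z ∈ Finset.univ, P x a z * f z = P x a z * ((f z - V z) + V z))]
      _ ≤ _ := h
  refine ⟨?_, ?_⟩
  · -- main bound
    intro k hk x a
    rw [Finset.mem_Icc] at hk
    obtain ⟨hk1, hk2⟩ := hk
    obtain ⟨n, rfl⟩ : ∃ n, k = n + 1 := ⟨k - 1, by omega⟩
    simp only [Nat.add_sub_cancel]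
    set Am : ℝ := ∑ j ∈ Finset.range n, γ ^ (n - j) * α ^ j with hAm
    have hAmnn : 0 ≤ Am := by
      rw [hAm]
      exact Finset.sum_nonneg (fun j _ =>
        mul_nonneg (pow_nonneg hγ0 _) (pow_nonneg hα0 _))
    have hmaxnn : (0:ℝ) ≤ max α γ := le_trans hα0 (le_max_left _ _)
    have hmxn : 0 ≤ (max α γ)^n := pow_nonneg hmaxnn n
    -- the minimum argument
    set X : ℝ := 2 * (max α γ) ^ n + (1-α) * Am + 2 * eB with hXdef
    have hXnn : 0 ≤ X := by
      rw [hXdef]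
      nlinarith [hmxn, hAmnn, heBnn, mul_nonneg hu.le hAmnn]
    -- pointwise error bound, easy branch
    have ediffeasy : ∀ z, |v (n+1) z - V z| ≤ 2 * H := by
      intro z
      calc |v (n+1) z - V z| ≤ |v (n+1) z| + |V z| := abs_sub _ _
        _ ≤ H + H := add_le_add (Vb (n+1) z) (hVabs z)
        _ = 2 * H := by ring
    -- pointwise error bound, fine branch
    have hvid : ∀ z, v (n+1) z - V z
        = ((1-α) * w (n+1) z - V z) + α * (w (n+1) z - w n z) := by
      intro z
      rw [hv (n+1) z]
      simp only [Nat.add_sub_cancel]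
      ring
    have ediff : ∀ z, |v (n+1) z - V z| ≤ hB (n+1) + α * zB (n+1) := by
      intro z
      rw [hvid z]
      calc |((1-α) * w (n+1) z - V z) + α * (w (n+1) z - w n z)|
          ≤ |(1-α) * w (n+1) z - V z| + |α * (w (n+1) z - w n z)| := abs_add_le _ _
        _ ≤ hB (n+1) + α * zB (n+1) := by
            rw [abs_mul, abs_of_nonneg hα0]
            exact add_le_add (Hcl (n+1) hk2 z)
              (mul_le_mul_of_nonneg_left (Zcl n hk2 z) hα0)
    -- numeric bound on hB (n+1) + α * zB (n+1)
    have hnum : hB (n+1) + α * zB (n+1) ≤ 2 * H * X := by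
      have hS1 : (∑ i ∈ Finset.range (n+1), γ^(n-i)*α^(i+1))
          = α * (∑ t ∈ Finset.range (n+1), γ^(n-t)*α^t) := by
        rw [Finset.mul_sum]
        exact Finset.sum_congr rfl (fun i _ => by rw [pow_succ]; ring)
      have hS : (∑ t ∈ Finset.range (n+1), γ^(n-t)*α^t) = Am + α^n := by
        rw [Finset.sum_range_succ]
        have e : n - n = 0 := by omega
        rw [e, pow_zero, one_mul, ← hAm]
      set G : ℝ := ∑ i ∈ Finset.range (n+1), γ ^ i with hG
      have hGnn : 0 ≤ G := Finset.sum_nonneg (fun i _ => pow_nonneg hγ0 _)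
      have hGH : G ≤ H := by
        have h1 := MDVIHelpers.geom_id γ (n+1)
        nlinarith [pow_nonneg hγ0 (n+1), hHg, hH0]
      have hexp : hB (n+1) + α * zB (n+1)
          = γ^(n+1)*H + 2*α^(n+1) + 2*α*Am
            + ((1-α)*EB*G + α*((1-α)*EB + eB)*G) := by
        simp only [hBdef, zBdef, Nat.add_sub_cancel, ← hG]
        rw [hS1, hS]
        ring
      have hsqu : Real.sqrt (1-α) ≤ 1 := Real.sqrt_le_one.mpr (by linarith)
      have hnoise : (1-α)*EB*G + α*((1-α)*EB + eB)*G ≤ 3 * H * eB := by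
        have h1 : (1-α)*EB*G + α*((1-α)*EB + eB)*G
            = (Real.sqrt (1-α) * (1 + α) + α) * (eB * G) := by
          rw [show (1-α)*EB = Real.sqrt (1-α) * eB from hEBeq]
          ring
        rw [h1]
        have h2 : Real.sqrt (1-α) * (1 + α) + α ≤ 3 := by
          nlinarith [hsqu, Real.sqrt_nonneg (1-α)]
        have h3 : eB * G ≤ eB * H := mul_le_mul_of_nonneg_left hGH heBnn
        have h4 : 0 ≤ eB * G := mul_nonneg heBnn hGnn
        nlinarith [mul_nonneg heBnn hH0.le]
      have hdet : γ^(n+1)*H + 2*α^(n+1) + 2*α*Am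
          ≤ 4*H*(max α γ)^n + 2*H*((1-α)*Am) := by
        have htel := MDVIHelpers.telescope_A α γ n
        rw [← hAm] at htel
        exact MDVIHelpers.det_bound α γ H hα0 hα1 hγ0 hγ1 hHg hH0 hH1 n Am hAmnn htel
      calc hB (n+1) + α * zB (n+1)
          = γ^(n+1)*H + 2*α^(n+1) + 2*α*Am
            + ((1-α)*EB*G + α*((1-α)*EB + eB)*G) := hexp
        _ ≤ (4*H*(max α γ)^n + 2*H*((1-α)*Am)) + 3*H*eB := add_le_add hdet hnoise
        _ ≤ 2*H*X := by
            rw [hXdef]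
            nlinarith [mul_nonneg hH0.le heBnn]
    -- combine branches
    have hfin : ∀ z, |v (n+1) z - V z| ≤ 2 * H * min 1 X := by
      intro z
      rcases le_total (1:ℝ) X with hm1 | hm1
      · rw [min_eq_left hm1]
        calc |v (n+1) z - V z| ≤ 2*H := ediffeasy z
          _ = 2*H*1 := by ring
      · rw [min_eq_right hm1]
        exact (ediff z).trans hnum
    -- conclude via sigma
    have hXrw : 2 * max α γ ^ n + Am / ((1:ℝ) / (1 - α))
        + 6 * H * Real.sqrt (L / (M:ℝ)) = X := by
      rw [hXdef, heBdef, one_div, div_inv_eq_mul]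
      ring
    rw [hXrw]
    have hcnn : 0 ≤ 2 * H * min 1 X := by
      refine mul_nonneg (by linarith [hH0]) (le_min (by norm_num) hXnn)
    calc sigmaP P (v (n+1)) x a
        ≤ sigmaP P (fun z => v (n+1) z - V z) x a + sigmaP P V x a := hsig_tri _ x a
      _ ≤ 2 * H * min 1 X + sigmaP P V x a :=
          add_le_add_left (hsig_le _ _ x a hcnn hfin) _
  · -- sigma of v 0 is zero
    intro x a
    simp only [sigmaP]
    have h1 : mdpP P (fun z => v 0 z ^ 2) x a = 0 := by
      simp only [mdpP]
      refine Finset.sum_eq_zero (fun z _ => ?_)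
      rw [hv0 z]
      ring
    have h2 : mdpP P (v 0) x a = 0 := by
      simp only [mdpP]
      refine Finset.sum_eq_zero (fun z _ => ?_)
      rw [hv0 z]
      ring
    rw [h1, h2]
    norm_num
end
end
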